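/- arXiv:2409.00624 — 7 statements merged into one kernel-verified Lean document; each statement's English description precedes it below -/
import Mathlib

section
/- Let S_n denote the number of subsets S of {1,…,n} such that no two elements of S differ by 1 or by 4 (i.e., with disallowed-differences set Q = {1,4}), with S_0 = 1. Then in the ring of formal power series ℤ[[x]], (∑_{n≥0} S_n x^n)·(1 − x − x^3 + x^4 − 2x^5 + x^6 − x^7) = 1 + x + x^2 + x^3 + 2x^4 + x^6. -/
/-- `restrictedCount Q n` is the number of subsets of `{1,…,n}` in which no two
elements differ by an element of `Q`. -/
def restrictedCount (Q : Finset ℕ) (n : ℕ) : ℕ :=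
  ((Finset.Icc 1 n).powerset.filter
    fun s => ∀ a ∈ s, ∀ b ∈ s, b < a → a - b ∉ Q).card


def NN (n : ℕ) (a b c d : Bool) : ℕ :=
  ((Finset.Icc 1 n).powerset.filter fun s =>
    (∀ x ∈ s, ∀ y ∈ s, y < x → x - y ∉ ({1, 4} : Finset ℕ)) ∧
    (n ∈ s ↔ a = true) ∧ (n - 1 ∈ s ↔ b = true) ∧
    (n - 2 ∈ s ↔ c = true) ∧ (n - 3 ∈ s ↔ d = true)).card

lemma card_split (t : Finset (Finset ℕ)) (p q : Finset ℕ → Prop)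
    [DecidablePred p] [DecidablePred q] :
    (t.filter p).card =
      (t.filter fun s => p s ∧ q s).card + (t.filter fun s => p s ∧ ¬ q s).card := by
  rw [← Finset.filter_filter, ← Finset.filter_filter,
    Finset.card_filter_add_card_filter_not]

lemma NN_succ_false (n : ℕ) (b c d : Bool) :
    NN (n+1) false b c d = NN n b c d true + NN n b c d false := by
  unfold NN
  rw [show ((Finset.Icc 1 n).powerset.filter fun s =>
      (∀ x ∈ s, ∀ y ∈ s, y < x → x - y ∉ ({1, 4} : Finset ℕ)) ∧
      (n ∈ s ↔ b = true) ∧ (n - 1 ∈ s ↔ c = true) ∧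
      (n - 2 ∈ s ↔ d = true) ∧ (n - 3 ∈ s ↔ true = true)).card =
      ((Finset.Icc 1 n).powerset.filter fun s =>
      ((∀ x ∈ s, ∀ y ∈ s, y < x → x - y ∉ ({1, 4} : Finset ℕ)) ∧
      (n ∈ s ↔ b = true) ∧ (n - 1 ∈ s ↔ c = true) ∧
      (n - 2 ∈ s ↔ d = true)) ∧ (n - 3 ∈ s)).card from
      congrArg _ (Finset.filter_congr fun s _ => by tauto)]
  rw [show ((Finset.Icc 1 n).powerset.filter fun s =>
      (∀ x ∈ s, ∀ y ∈ s, y < x → x - y ∉ ({1, 4} : Finset ℕ)) ∧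
      (n ∈ s ↔ b = true) ∧ (n - 1 ∈ s ↔ c = true) ∧
      (n - 2 ∈ s ↔ d = true) ∧ (n - 3 ∈ s ↔ false = true)).card =
      ((Finset.Icc 1 n).powerset.filter fun s =>
      ((∀ x ∈ s, ∀ y ∈ s, y < x → x - y ∉ ({1, 4} : Finset ℕ)) ∧
      (n ∈ s ↔ b = true) ∧ (n - 1 ∈ s ↔ c = true) ∧
      (n - 2 ∈ s ↔ d = true)) ∧ ¬(n - 3 ∈ s)).card from
      congrArg _ (Finset.filter_congr fun s _ => by
        simp only [Bool.false_eq_true, iff_false]; tauto)]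
  rw [← card_split]
  congr 1
  ext s
  simp only [Finset.mem_filter, Finset.mem_powerset, Bool.false_eq_true, iff_false,
    show n+1-1 = n from rfl, show n+1-2 = n-1 from rfl, show n+1-3 = n-2 from rfl]
  constructor
  · rintro ⟨hsub, hval, h1, h2, h3, h4⟩
    refine ⟨fun x hx => ?_, hval, h2, h3, h4⟩
    have := hsub hx
    have hne : x ≠ n + 1 := fun he => h1 (he ▸ hx)
    simp only [Finset.mem_Icc] at this ⊢
    omega
  · rintro ⟨hsub, hval, h2, h3, h4⟩
    have hn1 : n + 1 ∉ s := fun h => by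
      have := hsub h; simp only [Finset.mem_Icc] at this; omega
    refine ⟨fun x hx => ?_, hval, hn1, h2, h3, h4⟩
    have := hsub hx
    simp only [Finset.mem_Icc] at this ⊢
    omega

lemma NN_succ_true_true (n : ℕ) (c d : Bool) :
    NN (n+1) true true c d = 0 := by
  unfold NN
  rw [Finset.card_eq_zero, Finset.filter_eq_empty_iff]
  rintro s hs ⟨hval, h1, h2, _⟩
  simp only [Finset.mem_powerset] at hs
  simp only [iff_true, show n+1-1 = n from rfl] at h1 h2
  have hn : 1 ≤ n := by have := hs h2; simp only [Finset.mem_Icc] at this; omega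
  have := hval (n+1) h1 n h2 (by omega)
  simp only [Finset.mem_insert, Finset.mem_singleton] at this
  omega

lemma NN_succ_true_false (n : ℕ) (c d : Bool) :
    NN (n+1) true false c d = NN n false c d false := by
  unfold NN
  apply Eq.symm
  refine Finset.card_bij' (fun s _ => insert (n+1) s) (fun s _ => s.erase (n+1)) ?hi ?hj ?left ?right
  case hi =>
    intro s hs
    simp only [Finset.mem_filter, Finset.mem_powerset] at hs ⊢
    obtain ⟨hsub, hval, h1, h2, h3, h4⟩ := hs
    simp only [Bool.false_eq_true, iff_false] at h1 h4
    have hn1s : n + 1 ∉ s := fun h => by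
      have := hsub h; simp only [Finset.mem_Icc] at this; omega
    have hbound : ∀ x ∈ s, 1 ≤ x ∧ x ≤ n := fun x hx => by
      have := hsub hx; simpa only [Finset.mem_Icc] using this
    refine ⟨?_, ?_, ?_, ?_, ?_, ?_⟩
    · intro x hx
      simp only [Finset.mem_insert] at hx
      simp only [Finset.mem_Icc]
      rcases hx with rfl | hx
      · omega
      · have := hbound x hx; omega
    · intro x hx y hy hlt
      simp only [Finset.mem_insert] at hx hy
      simp only [Finset.mem_insert, Finset.mem_singleton]
      rcases hx with rfl | hx
      · rcases hy with rfl | hy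
        · omega
        · have hb := hbound y hy
          intro hmem
          rcases hmem with h | h
          · have hyn : y = n := by omega
            rw [hyn] at hy; exact h1 hy
          · have hyn : y = n - 3 := by omega
            rw [hyn] at hy; exact h4 hy
      · rcases hy with rfl | hy
        · have := hbound x hx; omega
        · simpa using hval x hx y hy hlt
    · simp
    · simp only [show n+1-1 = n from rfl, Finset.mem_insert, Bool.false_eq_true, iff_false]
      push_neg
      exact ⟨by omega, h1⟩
    · simp only [show n+1-2 = n-1 from rfl, Finset.mem_insert]
      constructor
      · rintro (h | h)
        · omega
        · exact h2.mp h
      · intro h; right; exact h2.mpr h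
    · simp only [show n+1-3 = n-2 from rfl, Finset.mem_insert]
      constructor
      · rintro (h | h)
        · omega
        · exact h3.mp h
      · intro h; right; exact h3.mpr h
  case hj => -- backward membership
    intro s hs
    simp only [Finset.mem_filter, Finset.mem_powerset] at hs ⊢
    obtain ⟨hsub, hval, h1, h2, h3, h4⟩ := hs
    simp only [iff_true] at h1
    simp only [Bool.false_eq_true, iff_false, show n+1-1 = n from rfl] at h2
    simp only [show n+1-2 = n-1 from rfl] at h3
    simp only [show n+1-3 = n-2 from rfl] at h4
    have hbound : ∀ x ∈ s, 1 ≤ x ∧ x ≤ n + 1 := fun x hx => by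
      have := hsub hx; simpa only [Finset.mem_Icc] using this
    have hn3 : n - 3 ∉ s := by
      intro h
      have hb := hbound _ h
      have := hval (n+1) h1 (n-3) h (by omega)
      simp only [Finset.mem_insert, Finset.mem_singleton] at this
      omega
    refine ⟨?_, ?_, ?_, ?_, ?_, ?_⟩
    · intro x hx
      simp only [Finset.mem_erase] at hx
      have := hbound _ hx.2
      simp only [Finset.mem_Icc]
      omega
    · intro x hx y hy hlt
      exact hval x (Finset.mem_of_mem_erase hx) y (Finset.mem_of_mem_erase hy) hlt
    · simp only [Finset.mem_erase, Bool.false_eq_true, iff_false]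
      intro h; exact h2 h.2
    · simp only [Finset.mem_erase]
      constructor
      · intro h; exact h3.mp h.2
      · intro h; exact ⟨by omega, h3.mpr h⟩
    · simp only [Finset.mem_erase]
      constructor
      · intro h; exact h4.mp h.2
      · intro h; exact ⟨by omega, h4.mpr h⟩
    · simp only [Finset.mem_erase, Bool.false_eq_true, iff_false]
      intro h; exact hn3 h.2
  case left => -- left inverse
    intro s hs
    simp only [Finset.mem_filter, Finset.mem_powerset] at hs
    apply Finset.erase_insert
    intro h
    have := hs.1 h; simp only [Finset.mem_Icc] at this; omega
  case right => -- right inverse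
    intro s hs
    simp only [Finset.mem_filter, Finset.mem_powerset] at hs
    exact Finset.insert_erase (hs.2.2.1.mpr (by trivial))

def TT (n : ℕ) : ℕ :=
  NN n false false false false + NN n false false false true +
  NN n false false true false + NN n false false true true +
  NN n false true false false + NN n false true false true +
  NN n false true true false + NN n false true true true +
  NN n true false false false + NN n true false false true +
  NN n true false true false + NN n true false true true +
  NN n true true false false + NN n true true false true +
  NN n true true true false + NN n true true true true

lemma total (n : ℕ) : restrictedCount {1, 4} n = TT n := by
  unfold restrictedCount TT NN
  simp only [Finset.card_filter, ← Finset.sum_add_distrib]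
  apply Finset.sum_congr rfl
  intro s _
  by_cases h1 : n ∈ s <;> by_cases h2 : n - 1 ∈ s <;>
    by_cases h3 : n - 2 ∈ s <;> by_cases h4 : n - 3 ∈ s <;>
    simp [h1, h2, h3, h4]

lemma keyrec (n : ℕ) :
    TT (n+7) + TT (n+3) + TT (n+1) = TT (n+6) + TT (n+4) + 2 * TT (n+2) + TT n := by
  simp only [TT, show n+7 = (n+6)+1 from rfl, show n+6 = (n+5)+1 from rfl,
    show n+5 = (n+4)+1 from rfl, show n+4 = (n+3)+1 from rfl,
    show n+3 = (n+2)+1 from rfl, show n+2 = (n+1)+1 from rfl,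
    show n+1 = n+1 from rfl, NN_succ_false, NN_succ_true_true, NN_succ_true_false]
  ring

lemma rc_recurrence (m : ℕ) :
    (restrictedCount {1, 4} (m+7) : ℤ) =
      restrictedCount {1, 4} (m+6) + restrictedCount {1, 4} (m+4) -
      restrictedCount {1, 4} (m+3) + 2 * restrictedCount {1, 4} (m+2) -
      restrictedCount {1, 4} (m+1) + restrictedCount {1, 4} m := by
  have h := keyrec m
  simp only [← total] at h
  omega

lemma rc0 : restrictedCount {1, 4} 0 = 1 := by decide
lemma rc1 : restrictedCount {1, 4} 1 = 2 := by decide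
lemma rc2 : restrictedCount {1, 4} 2 = 3 := by decide
lemma rc3 : restrictedCount {1, 4} 3 = 5 := by decide
lemma rc4 : restrictedCount {1, 4} 4 = 8 := by decide
lemma rc5 : restrictedCount {1, 4} 5 = 11 := by decide
lemma rc6 : restrictedCount {1, 4} 6 = 17 := by decide

/-- generating function for `S^{{1,4}}_n`. -/
theorem stmt_3 :
    (PowerSeries.mk fun n => (restrictedCount {1, 4} n : ℤ)) *
        (1 - PowerSeries.X - PowerSeries.X ^ 3 + PowerSeries.X ^ 4 -
          2 * PowerSeries.X ^ 5 + PowerSeries.X ^ 6 - PowerSeries.X ^ 7) =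
      1 + PowerSeries.X + PowerSeries.X ^ 2 + PowerSeries.X ^ 3 +
        2 * PowerSeries.X ^ 4 + PowerSeries.X ^ 6 := by
  set f := PowerSeries.mk fun n => (restrictedCount {1, 4} n : ℤ) with hf
  have e1 : f * (1 - PowerSeries.X - PowerSeries.X ^ 3 + PowerSeries.X ^ 4 -
      2 * PowerSeries.X ^ 5 + PowerSeries.X ^ 6 - PowerSeries.X ^ 7) =
      f - f * PowerSeries.X ^ 1 - f * PowerSeries.X ^ 3 + f * PowerSeries.X ^ 4 -
      (f * PowerSeries.X ^ 5 + f * PowerSeries.X ^ 5) + f * PowerSeries.X ^ 6 -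
      f * PowerSeries.X ^ 7 := by ring
  have e2 : (1 : PowerSeries ℤ) + PowerSeries.X + PowerSeries.X ^ 2 + PowerSeries.X ^ 3 +
      2 * PowerSeries.X ^ 4 + PowerSeries.X ^ 6 =
      1 + PowerSeries.X ^ 1 + PowerSeries.X ^ 2 + PowerSeries.X ^ 3 +
      (PowerSeries.X ^ 4 + PowerSeries.X ^ 4) + PowerSeries.X ^ 6 := by ring
  rw [e1, e2]
  ext n
  simp only [map_add, map_sub, PowerSeries.coeff_mul_X_pow', PowerSeries.coeff_one,
    PowerSeries.coeff_X_pow, hf, PowerSeries.coeff_mk]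
  rcases Nat.lt_or_ge n 7 with hn | hn
  · interval_cases n <;> norm_num [rc0, rc1, rc2, rc3, rc4, rc5, rc6]
  · obtain ⟨m, rfl⟩ : ∃ m, n = m + 7 := ⟨n - 7, by omega⟩
    have h1 : 1 ≤ m + 7 := by omega
    have h3 : 3 ≤ m + 7 := by omega
    have h4 : 4 ≤ m + 7 := by omega
    have h5 : 5 ≤ m + 7 := by omega
    have h6 : 6 ≤ m + 7 := by omega
    have h7 : 7 ≤ m + 7 := by omega
    have g0 : ¬(m + 7 = 0) := by omega
    have g1 : ¬(m + 7 = 1) := by omega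
    have g2 : ¬(m + 7 = 2) := by omega
    have g3 : ¬(m + 7 = 3) := by omega
    have g4 : ¬(m + 7 = 4) := by omega
    have g6 : ¬(m + 7 = 6) := by omega
    simp only [if_pos h1, if_pos h3, if_pos h4, if_pos h5, if_pos h6, if_pos h7,
      if_neg g0, if_neg g1, if_neg g2, if_neg g3, if_neg g4, if_neg g6,
      show m+7-1 = m+6 from rfl, show m+7-3 = m+4 from rfl, show m+7-4 = m+3 from rfl,
      show m+7-5 = m+2 from rfl, show m+7-6 = m+1 from rfl, show m+7-7 = m from rfl]
    have := rc_recurrence m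
    push_cast at this ⊢
    linarith
end

section
/- Let m ≥ 2 and n ≥ 0 and k ≥ 0 be integers. The number of k-element subsets S of {1,…,n} such that no two elements of S differ by an element of Q = {1, m} equals the number of permutations π of {1,…,n+1} with the following two properties: (a) there exist k pairwise disjoint pairs {i, i+1} ⊆ {1,…,n+1} such that π exchanges the two elements of each pair (π(i) = i+1 and π(i+1) = i) and π fixes every element not belonging to one of the k pairs; (b) for every i with 1 ≤ i ≤ n+2−m, (max over j = 0,…,m−1 of π(i+j)) − (min over j = 0,…,m−1 of π(i+j)) ≤ m. -/
/-- `restrictedCountK Q n k` is the number of `k`-element subsets of `{1,…,n}` in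
which no two elements differ by an element of `Q`. -/
def restrictedCountK (Q : Finset ℕ) (n k : ℕ) : ℕ :=
  ((Finset.Icc 1 n).powerset.filter
    fun s => s.card = k ∧ ∀ a ∈ s, ∀ b ∈ s, b < a → a - b ∉ Q).card

/-- The underlying function of the permutation attached to a set `S`:
swap `x` and `x+1` for each `x ∈ S`. -/
def swapFun (S : Finset ℕ) (x : ℕ) : ℕ :=
  if x ∈ S then x + 1 else if x - 1 ∈ S then x - 1 else x

lemma swapFun_involutive (S : Finset ℕ) (h0 : 0 ∉ S) (h1 : ∀ a ∈ S, a + 1 ∉ S) :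
    Function.Involutive (swapFun S) := by
  intro x
  by_cases hx : x ∈ S
  · have hx1 : x + 1 ∉ S := h1 x hx
    simp [swapFun, hx, hx1]
  · by_cases hx1 : x - 1 ∈ S
    · have hx0 : x ≠ 0 := by rintro rfl; exact h0 (by simpa using hx1)
      have he : x - 1 + 1 = x := Nat.succ_pred_eq_of_ne_zero hx0
      simp [swapFun, hx, hx1, he]
    · simp [swapFun, hx, hx1]

/-- The permutation attached to a set `S`. -/
def swapPerm (S : Finset ℕ) : Equiv.Perm ℕ :=
  if h : 0 ∉ S ∧ ∀ a ∈ S, a + 1 ∉ S then (swapFun_involutive S h.1 h.2).toPerm else 1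

lemma swapPerm_apply (S : Finset ℕ) (h0 : 0 ∉ S) (h1 : ∀ a ∈ S, a + 1 ∉ S) (x : ℕ) :
    swapPerm S x = swapFun S x := by
  rw [swapPerm, dif_pos ⟨h0, h1⟩]
  rfl

lemma swapFun_le (S : Finset ℕ) (x : ℕ) : swapFun S x ≤ x + 1 := by
  unfold swapFun; split_ifs <;> omega

lemma le_swapFun (S : Finset ℕ) (x : ℕ) : x - 1 ≤ swapFun S x := by
  unfold swapFun; split_ifs <;> omega

lemma swapFun_of_mem {S : Finset ℕ} {x : ℕ} (h : x ∈ S) : swapFun S x = x + 1 := by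
  simp [swapFun, h]

lemma swapFun_le_of_not_mem {S : Finset ℕ} {x : ℕ} (h : x ∉ S) : swapFun S x ≤ x := by
  unfold swapFun; rw [if_neg h]; split_ifs <;> omega

lemma le_swapFun_of_pred_not_mem {S : Finset ℕ} {x : ℕ} (h : x - 1 ∉ S) :
    x ≤ swapFun S x := by
  by_cases h1 : x ∈ S
  · simp [swapFun, h1]
  · rw [swapFun, if_neg h1, if_neg h]

lemma swapFun_of_not_mem {S : Finset ℕ} {x : ℕ} (h : x ∉ S) (h' : x - 1 ∉ S) :
    swapFun S x = x := by
  simp [swapFun, h, h']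

/-- The set recovered from a permutation. -/
def extractSet (n : ℕ) (π : Equiv.Perm ℕ) : Finset ℕ :=
  (Finset.Icc 1 n).filter (fun i => π i = i + 1)

/-- The set of "good" subsets. -/
def goodSets (m n k : ℕ) : Finset (Finset ℕ) :=
  (Finset.Icc 1 n).powerset.filter
    fun s => s.card = k ∧ ∀ a ∈ s, ∀ b ∈ s, b < a → a - b ∉ ({1, m} : Finset ℕ)

/-- The predicate on permutations, mirroring the statement. -/
def GoodPerm (m n k : ℕ) (hm : 1 < m) (π : Equiv.Perm ℕ) : Prop :=
  (∀ x : ℕ, x ∉ Finset.Icc 1 (n + 1) → π x = x) ∧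
  (∃ T : Finset ℕ, T.card = k ∧
    (∀ i ∈ T, 1 ≤ i ∧ i + 1 ≤ n + 1) ∧
    (∀ i ∈ T, ∀ j ∈ T, i < j → i + 1 < j) ∧
    (∀ i ∈ T, π i = i + 1 ∧ π (i + 1) = i) ∧
    (∀ x : ℕ, 1 ≤ x → x ≤ n + 1 → (∀ i ∈ T, x ≠ i ∧ x ≠ i + 1) → π x = x)) ∧
  (∀ i : ℕ, 1 ≤ i → i ≤ n + 2 - m →
    (Finset.range m).sup' (Finset.nonempty_range_iff.mpr (by omega))
        (fun j => π (i + j)) -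
      (Finset.range m).inf' (Finset.nonempty_range_iff.mpr (by omega))
        (fun j => π (i + j)) ≤ m)

lemma goodSets_facts {m n k : ℕ} (hm : 2 ≤ m) {s : Finset ℕ} (hs : s ∈ goodSets m n k) :
    s ⊆ Finset.Icc 1 n ∧ s.card = k ∧
      (0 ∉ s) ∧ (∀ a ∈ s, a + 1 ∉ s) ∧ (∀ a ∈ s, a + m ∉ s) ∧
      (∀ a ∈ s, ∀ b ∈ s, b < a → a - b ∉ ({1, m} : Finset ℕ)) := by
  rw [goodSets, Finset.mem_filter, Finset.mem_powerset] at hs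
  obtain ⟨hsub, hcard, havoid⟩ := hs
  refine ⟨hsub, hcard, ?_, ?_, ?_, havoid⟩
  · intro h0
    have := hsub h0
    simp [Finset.mem_Icc] at this
  · intro a ha h
    exact havoid (a + 1) h a ha (by omega) (by simp)
  · intro a ha h
    exact havoid (a + m) h a ha (by omega) (by simp)

/-- Recovering the set from a permutation built from adjacent transpositions. -/
lemma extract_eq (n : ℕ) (π : Equiv.Perm ℕ) (T : Finset ℕ)
    (hTmem : ∀ i ∈ T, 1 ≤ i ∧ i + 1 ≤ n + 1)
    (hTswap : ∀ i ∈ T, π i = i + 1 ∧ π (i + 1) = i)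
    (hTfix : ∀ x : ℕ, 1 ≤ x → x ≤ n + 1 → (∀ i ∈ T, x ≠ i ∧ x ≠ i + 1) → π x = x) :
    extractSet n π = T := by
  ext i
  simp only [extractSet, Finset.mem_filter, Finset.mem_Icc]
  constructor
  · rintro ⟨⟨h1, h2⟩, h3⟩
    by_contra hiT
    have hfix : π i = i := by
      apply hTfix i h1 (by omega)
      intro t ht
      refine ⟨fun h => hiT (h ▸ ht), fun h => ?_⟩
      have h4 := (hTswap t ht).2
      rw [← h] at h4
      omega
    omega
  · intro hiT
    obtain ⟨h1, h2⟩ := hTmem i hiT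
    exact ⟨⟨h1, by omega⟩, (hTswap i hiT).1⟩

lemma forward_mem {m n k : ℕ} (hm : 2 ≤ m) {s : Finset ℕ} (hs : s ∈ goodSets m n k) :
    GoodPerm m n k hm (swapPerm s) := by
  obtain ⟨hsub, hcard, h0, h1, hmavoid, havoid⟩ := goodSets_facts hm hs
  have hsp : ∀ x, swapPerm s x = swapFun s x := swapPerm_apply s h0 h1
  have hmemIcc : ∀ a ∈ s, 1 ≤ a ∧ a ≤ n := by
    intro a ha; simpa [Finset.mem_Icc] using hsub ha
  refine ⟨?_, ⟨s, hcard, ?_, ?_, ?_, ?_⟩, ?_⟩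
  · -- fixed outside [1, n+1]
    intro x hx
    simp only [Finset.mem_Icc, not_and_or, not_le] at hx
    rw [hsp]
    apply swapFun_of_not_mem
    · intro h; have := hmemIcc x h; omega
    · intro h; have := hmemIcc _ h; omega
  · intro i hi; have := hmemIcc i hi; omega
  · intro i hi j hj hij
    have h2 := havoid j hj i hi hij
    have : j - i ≠ 1 := fun h => h2 (by simp [h])
    omega
  · intro i hi
    constructor
    · rw [hsp]; exact swapFun_of_mem hi
    · rw [hsp]
      have hi1 : i + 1 ∉ s := h1 i hi
      simp [swapFun, hi1, hi]
  · intro x hx1 hx2 hx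
    rw [hsp]
    apply swapFun_of_not_mem
    · intro h; exact (hx x h).1 rfl
    · intro h
      have := (hx _ h).2
      omega
  · -- window condition
    intro i hi1 hi2
    by_cases hc : i - 1 ∈ s
    · have hsup : (Finset.range m).sup' (Finset.nonempty_range_iff.mpr (by omega))
          (fun j => swapPerm s (i + j)) ≤ i + m - 1 := by
        apply Finset.sup'_le
        intro j hj
        rw [Finset.mem_range] at hj
        rw [hsp]
        by_cases hjm : j = m - 1
        · have hnm : i + j ∉ s := by
            intro h
            have he : i - 1 + m = i + j := by omega
            exact hmavoid (i - 1) hc (he ▸ h)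
          have := swapFun_le_of_not_mem hnm
          omega
        · have := swapFun_le s (i + j)
          omega
      have hinf : i - 1 ≤ (Finset.range m).inf' (Finset.nonempty_range_iff.mpr (by omega))
          (fun j => swapPerm s (i + j)) := by
        apply Finset.le_inf'
        intro j hj
        rw [hsp]
        have := le_swapFun s (i + j)
        omega
      omega
    · have hsup : (Finset.range m).sup' (Finset.nonempty_range_iff.mpr (by omega))
          (fun j => swapPerm s (i + j)) ≤ i + m := by
        apply Finset.sup'_le
        intro j hj
        rw [Finset.mem_range] at hj
        rw [hsp]
        have := swapFun_le s (i + j)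
        omega
      have hinf : i ≤ (Finset.range m).inf' (Finset.nonempty_range_iff.mpr (by omega))
          (fun j => swapPerm s (i + j)) := by
        apply Finset.le_inf'
        intro j hj
        rw [hsp]
        by_cases hj0 : j = 0
        · subst hj0
          have hnm : i + 0 - 1 ∉ s := by simpa using hc
          have := le_swapFun_of_pred_not_mem hnm
          omega
        · have := le_swapFun s (i + j)
          omega
      omega

lemma backward_mem {m n k : ℕ} (hm : 2 ≤ m) {π : Equiv.Perm ℕ}
    (hπ : GoodPerm m n k hm π) : extractSet n π ∈ goodSets m n k := by
  obtain ⟨hout, ⟨T, hTcard, hTmem, hTdisj, hTswap, hTfix⟩, hwin⟩ := hπ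
  have hST := extract_eq n π T hTmem hTswap hTfix
  rw [goodSets, Finset.mem_filter, Finset.mem_powerset]
  refine ⟨Finset.filter_subset _ _, by rw [hST]; exact hTcard, ?_⟩
  intro a ha b hb hba hmem
  rw [hST] at ha hb
  simp only [Finset.mem_insert, Finset.mem_singleton] at hmem
  rcases hmem with h1 | h1
  · have := hTdisj b hb a ha hba
    omega
  · -- a = b + m
    have hab : a = b + m := by omega
    subst hab
    have hb1 : 1 ≤ b ∧ b + 1 ≤ n + 1 := hTmem b hb
    have ha1 : 1 ≤ b + m ∧ b + m + 1 ≤ n + 1 := hTmem (b + m) ha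
    have hwb := hwin (b + 1) (by omega) (by omega)
    have hv0 : π (b + 1 + 0) = b := by
      simpa using (hTswap b hb).2
    have hvm : π (b + 1 + (m - 1)) = b + m + 1 := by
      have he : b + 1 + (m - 1) = b + m := by omega
      rw [he]
      exact (hTswap (b + m) ha).1
    have hle1 : (Finset.range m).inf' (Finset.nonempty_range_iff.mpr (by omega))
        (fun j => π (b + 1 + j)) ≤ b := by
      have := Finset.inf'_le (b := (0 : ℕ))
        (f := fun j => π (b + 1 + j))
        (Finset.mem_range.mpr (by omega : (0:ℕ) < m))
      exact le_of_le_of_eq this hv0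
    have hle2 : b + m + 1 ≤ (Finset.range m).sup' (Finset.nonempty_range_iff.mpr (by omega))
        (fun j => π (b + 1 + j)) := by
      have := Finset.le_sup' (b := m - 1)
        (f := fun j => π (b + 1 + j))
        (Finset.mem_range.mpr (by omega : m - 1 < m))
      exact le_of_eq_of_le hvm.symm this
    omega

lemma left_inverse_aux {m n k : ℕ} (hm : 2 ≤ m) {s : Finset ℕ} (hs : s ∈ goodSets m n k) :
    extractSet n (swapPerm s) = s := by
  obtain ⟨hsub, hcard, h0, h1, hmavoid, havoid⟩ := goodSets_facts hm hs
  have hsp : ∀ x, swapPerm s x = swapFun s x := swapPerm_apply s h0 h1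
  ext i
  simp only [extractSet, Finset.mem_filter, Finset.mem_Icc]
  constructor
  · rintro ⟨⟨hi1, hi2⟩, h3⟩
    rw [hsp] at h3
    by_contra his
    rw [swapFun, if_neg his] at h3
    split_ifs at h3 <;> omega
  · intro hi
    have hmem := hsub hi
    simp only [Finset.mem_Icc] at hmem
    exact ⟨hmem, by rw [hsp]; exact swapFun_of_mem hi⟩

lemma right_inverse_aux {m n k : ℕ} (hm : 2 ≤ m) {π : Equiv.Perm ℕ}
    (hπ : GoodPerm m n k hm π) : swapPerm (extractSet n π) = π := by
  obtain ⟨hout, ⟨T, hTcard, hTmem, hTdisj, hTswap, hTfix⟩, hwin⟩ := hπ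
  have hST := extract_eq n π T hTmem hTswap hTfix
  set S := extractSet n π with hSdef
  have h0 : 0 ∉ S := by
    intro h
    have := Finset.mem_filter.mp h
    simp [Finset.mem_Icc] at this
  have h1 : ∀ a ∈ S, a + 1 ∉ S := by
    intro a ha h
    rw [hST] at ha h
    have := hTdisj a ha (a + 1) h (by omega)
    omega
  have hsp : ∀ x, swapPerm S x = swapFun S x := swapPerm_apply S h0 h1
  apply Equiv.ext
  intro x
  rw [hsp]
  by_cases hx : x ∈ S
  · rw [swapFun_of_mem hx]
    exact ((Finset.mem_filter.mp hx).2).symm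
  · by_cases hx1 : x - 1 ∈ S
    · have hx1' : 1 ≤ x - 1 ∧ x - 1 ≤ n := by
        have := (Finset.mem_filter.mp hx1).1
        simpa [Finset.mem_Icc] using this
      have hxe : x - 1 + 1 = x := by omega
      rw [swapFun, if_neg hx, if_pos hx1]
      rw [hST] at hx1
      have h2 := (hTswap (x - 1) hx1).2
      rw [hxe] at h2
      exact h2.symm
    · rw [swapFun_of_not_mem hx hx1]
      by_cases hxI : x ∈ Finset.Icc 1 (n + 1)
      · simp only [Finset.mem_Icc] at hxI
        symm
        apply hTfix x hxI.1 hxI.2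
        intro t ht
        rw [← hST] at ht
        constructor
        · rintro rfl; exact hx ht
        · rintro rfl
          exact hx1 (by simpa using ht)
      · exact (hout x hxI).symm

theorem stmt5_aux (m n k : ℕ) (hm : 2 ≤ m) :
    (goodSets m n k).card = Nat.card {π : Equiv.Perm ℕ // GoodPerm m n k hm π} := by
  rw [← Nat.card_eq_finsetCard]
  exact Nat.card_congr
    { toFun := fun s => ⟨swapPerm s.1, forward_mem hm s.2⟩
      invFun := fun p => ⟨extractSet n p.1, backward_mem hm p.2⟩
      left_inv := fun s => Subtype.ext (left_inverse_aux hm s.2)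
      right_inv := fun p => Subtype.ext (right_inverse_aux hm p.2) }

/-- bijection between `k`-subsets of `{1,…,n}` avoiding differences in
`{1,m}` and permutations of `{1,…,n+1}` consisting of `k` disjoint adjacent
transpositions, such that any `m` consecutive values differ by at most `m`. -/
theorem stmt_5 (m n k : ℕ) (hm : 2 ≤ m) :
    restrictedCountK {1, m} n k =
      Nat.card {π : Equiv.Perm ℕ //
        (∀ x : ℕ, x ∉ Finset.Icc 1 (n + 1) → π x = x) ∧
        (∃ T : Finset ℕ, T.card = k ∧
          (∀ i ∈ T, 1 ≤ i ∧ i + 1 ≤ n + 1) ∧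
          (∀ i ∈ T, ∀ j ∈ T, i < j → i + 1 < j) ∧
          (∀ i ∈ T, π i = i + 1 ∧ π (i + 1) = i) ∧
          (∀ x : ℕ, 1 ≤ x → x ≤ n + 1 → (∀ i ∈ T, x ≠ i ∧ x ≠ i + 1) → π x = x)) ∧
        (∀ i : ℕ, 1 ≤ i → i ≤ n + 2 - m →
          (Finset.range m).sup' (Finset.nonempty_range_iff.mpr (by omega))
              (fun j => π (i + j)) -
            (Finset.range m).inf' (Finset.nonempty_range_iff.mpr (by omega))
              (fun j => π (i + j)) ≤ m)} := by
  exact stmt5_aux m n k hm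
end

section
/- Let j ≥ 1, m ≥ 1, n ≥ 0 and k ≥ 0 be integers. The number of k-element subsets S of {1,…,n} such that no two elements of S differ by an element of Q = {m, 2m, …, jm} equals the number of permutations π of {1,…,n+jm} satisfying π(i) − i ∈ {−m, 0, jm} for all i ∈ {1,…,n+jm} that have exactly k excedances. -/
open Finset

namespace Stmt6

lemma pred_mul (m t : ℕ) (ht : 1 ≤ t) : (t - 1) * m + m = t * m := by
  cases t with
  | zero => omega
  | succ t => rw [Nat.succ_sub_one, Nat.succ_mul]

lemma sub_mul_add (m t t' : ℕ) (h : t ≤ t') : (t' - t) * m + t * m = t' * m := by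
  rw [← add_mul, Nat.sub_add_cancel h]

/-- Forward map: the permutation associated to a difference-avoiding set `S`. -/
def fS (j m : ℕ) (S : Finset ℕ) (x : ℕ) : ℕ :=
  if x ∈ S then x + j * m
  else if ∃ s ∈ S, ∃ t ∈ Finset.Icc 1 j, x = s + t * m then x - m
  else x

/-- Inverse map. -/
def gS (j m : ℕ) (S : Finset ℕ) (x : ℕ) : ℕ :=
  if ∃ s ∈ S, x = s + j * m then x - j * m
  else if ∃ s ∈ S, ∃ t ∈ Finset.range j, x = s + t * m then x + m
  else x

section Forward

variable {j m n : ℕ} {S : Finset ℕ}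
  (hj : 1 ≤ j) (hm : 1 ≤ m)
  (hA : ∀ a ∈ S, ∀ b ∈ S, b < a → ∀ t, 1 ≤ t → t ≤ j → a ≠ b + t * m)

include hm hA in
/-- Unique representation `x = s + t*m` with `s ∈ S`, `t ≤ j`. -/
lemma uniq {s s' t t' : ℕ} (hs : s ∈ S) (hs' : s' ∈ S) (ht : t ≤ j) (ht' : t' ≤ j)
    (h : s + t * m = s' + t' * m) : s = s' ∧ t = t' := by
  rcases Nat.lt_trichotomy t t' with hlt | heq | hgt
  · have h1 := sub_mul_add m t t' (le_of_lt hlt)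
    have h2 : 1 * 1 ≤ (t' - t) * m := Nat.mul_le_mul (by omega) hm
    exact absurd (by omega : s = s' + (t' - t) * m)
      (hA s hs s' hs' (by omega) (t' - t) (by omega) (by omega))
  · subst heq; exact ⟨by omega, rfl⟩
  · have h1 := sub_mul_add m t' t (le_of_lt hgt)
    have h2 : 1 * 1 ≤ (t - t') * m := Nat.mul_le_mul (by omega) hm
    exact absurd (by omega : s' = s + (t - t') * m)
      (hA s' hs' s hs (by omega) (t - t') (by omega) (by omega))

include hj hm hA in
lemma gf : ∀ x, gS j m S (fS j m S x) = x := by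
  intro x
  unfold fS
  split_ifs with h1 h2
  · -- x ∈ S
    unfold gS
    rw [if_pos ⟨x, h1, rfl⟩]
    omega
  · -- x = s + t*m, 1 ≤ t ≤ j
    obtain ⟨s, hs, t, htm, rfl⟩ := h2
    rw [mem_Icc] at htm
    have e1 := pred_mul m t htm.1
    have hx : s + t * m - m = s + (t - 1) * m := by omega
    rw [hx]
    unfold gS
    rw [if_neg, if_pos ⟨s, hs, t - 1, Finset.mem_range.2 (by omega), rfl⟩]
    · omega
    · rintro ⟨s', hs', he⟩
      have := uniq hm hA hs hs' (by omega) le_rfl he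
      omega
  · -- fixed
    unfold gS
    rw [if_neg, if_neg]
    · rintro ⟨s, hs, t, ht, rfl⟩
      rw [Finset.mem_range] at ht
      rcases Nat.eq_zero_or_pos t with rfl | htp
      · simp only [zero_mul, add_zero] at h1 hs; exact h1 hs
      · exact h2 ⟨s, hs, t, mem_Icc.2 (by omega), rfl⟩
    · rintro ⟨s, hs, he⟩
      exact h2 ⟨s, hs, j, mem_Icc.2 ⟨hj, le_rfl⟩, he⟩

include hj hm hA in
lemma fg : ∀ x, fS j m S (gS j m S x) = x := by
  intro x
  unfold gS
  split_ifs with h1 h2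
  · obtain ⟨s, hs, rfl⟩ := h1
    have hx : s + j * m - j * m = s := by omega
    rw [hx]
    unfold fS
    rw [if_pos hs]
  · obtain ⟨s, hs, t, ht, rfl⟩ := h2
    rw [Finset.mem_range] at ht
    have e1 : (t + 1) * m = t * m + m := by rw [add_mul]; omega
    have hx : s + t * m + m = s + (t + 1) * m := by omega
    rw [hx]
    unfold fS
    rw [if_neg, if_pos ⟨s, hs, t + 1, mem_Icc.2 (by omega), rfl⟩]
    · omega
    · intro hmem
      have := uniq hm hA hmem hs (show 0 ≤ j by omega) (show t + 1 ≤ j by omega)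
        (show s + (t + 1) * m + 0 * m = s + (t + 1) * m by rw [zero_mul, add_zero])
      omega
  · unfold fS
    rw [if_neg, if_neg]
    · rintro ⟨s, hs, t, ht, rfl⟩
      rw [mem_Icc] at ht
      rcases Nat.eq_or_lt_of_le ht.2 with rfl | hlt
      · exact h1 ⟨s, hs, rfl⟩
      · exact h2 ⟨s, hs, t, Finset.mem_range.2 hlt, rfl⟩
    · intro hmem
      exact h2 ⟨x, hmem, 0, Finset.mem_range.2 (by omega), by rw [zero_mul, add_zero]⟩

variable (hS : S ⊆ Finset.Icc 1 n)

include hS in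
lemma mem_cond {x : ℕ} (h : (x ∈ S) ∨ ∃ s ∈ S, ∃ t ∈ Finset.Icc 1 j, x = s + t * m) :
    x ∈ Finset.Icc 1 (n + j * m) := by
  rcases h with h | ⟨s, hs, t, ht, rfl⟩
  · have := hS h; rw [mem_Icc] at this ⊢; omega
  · have h1 := hS hs
    rw [mem_Icc] at h1 ht ⊢
    have h2 : t * m ≤ j * m := Nat.mul_le_mul_right m ht.2
    omega

include hS in
lemma fS_fix {x : ℕ} (h : x ∉ Finset.Icc 1 (n + j * m)) : fS j m S x = x := by
  unfold fS
  rw [if_neg, if_neg]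
  · intro hc; exact h (mem_cond hS (Or.inr hc))
  · intro hc; exact h (mem_cond hS (Or.inl hc))

include hS in
lemma fS_disp {i : ℕ} (_hi : i ∈ Finset.Icc 1 (n + j * m)) :
    (fS j m S i : ℤ) - i = -(m : ℤ) ∨ (fS j m S i : ℤ) - i = 0 ∨
      (fS j m S i : ℤ) - i = (j : ℤ) * m := by
  unfold fS
  split_ifs with h1 h2
  · right; right; push_cast; ring
  · left
    obtain ⟨s, hs, t, ht, rfl⟩ := h2
    rw [mem_Icc] at ht
    have h3 := hS hs; rw [mem_Icc] at h3
    have h4 : 1 * m ≤ t * m := Nat.mul_le_mul_right m ht.1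
    have h5 : m ≤ s + t * m := by omega
    push_cast [Nat.cast_sub h5]
    ring
  · right; left; omega

include hj hm hS in
lemma fS_exc : (Finset.Icc 1 (n + j * m)).filter (fun i => i < fS j m S i) = S := by
  ext i
  rw [mem_filter]
  constructor
  · rintro ⟨hi, hlt⟩
    unfold fS at hlt
    split_ifs at hlt with h1 h2
    · exact h1
    · obtain ⟨s, hs, t, ht, he⟩ := h2
      rw [mem_Icc] at ht hi
      omega
    · omega
  · intro hi
    refine ⟨mem_cond hS (Or.inl hi), ?_⟩
    unfold fS
    rw [if_pos hi]
    have : 1 * 1 ≤ j * m := Nat.mul_le_mul hj hm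
    omega

end Forward

section Converse

variable {j m n : ℕ} {π : Equiv.Perm ℕ}
  (hj : 1 ≤ j) (hm : 1 ≤ m)
  (hfix : ∀ x : ℕ, x ∉ Finset.Icc 1 (n + j * m) → π x = x)
  (htri : ∀ i ∈ Finset.Icc 1 (n + j * m), π i + m = i ∨ π i = i ∨ π i = i + j * m)

include hfix in
lemma mem_of_move {x : ℕ} (h : π x ≠ x) : x ∈ Finset.Icc 1 (n + j * m) := by
  by_contra hc; exact h (hfix x hc)

include hfix in
lemma maps_Icc {i : ℕ} (h : i ∈ Finset.Icc 1 (n + j * m)) :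
    π i ∈ Finset.Icc 1 (n + j * m) := by
  by_contra hc
  have h1 := hfix (π i) hc
  have h2 : π i = i := π.injective h1
  rw [h2] at hc
  exact hc h

include hfix htri in
lemma pre_tri {y : ℕ} (hy : y ∈ Finset.Icc 1 (n + j * m)) :
    ∃ x ∈ Finset.Icc 1 (n + j * m),
      π x = y ∧ (x = y + m ∨ x = y ∨ y = x + j * m) := by
  have hmem : π.symm y ∈ Finset.Icc 1 (n + j * m) := by
    by_contra hc
    have h1 := hfix _ hc
    rw [π.apply_symm_apply] at h1
    rw [← h1] at hc
    exact hc hy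
  refine ⟨π.symm y, hmem, π.apply_symm_apply y, ?_⟩
  have hx : π (π.symm y) = y := π.apply_symm_apply y
  rcases htri _ hmem with h | h | h
  · left; omega
  · right; left; omega
  · right; right; omega

include hj hm hfix htri in
/-- The cycle structure lemma: if `π s = s + jm` then `π (s+tm) = s+(t-1)m`. -/
lemma cyc : ∀ s, s ∈ Finset.Icc 1 (n + j * m) → π s = s + j * m →
    ∀ t, 1 ≤ t → t ≤ j → π (s + t * m) = s + (t - 1) * m := by
  intro s
  induction s using Nat.strong_induction_on with
  | _ s IH =>
    intro hsI hπs t ht1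
    induction t, ht1 using Nat.le_induction with
    | base =>
      intro h1j
      simp only [one_mul, Nat.sub_self, zero_mul, add_zero]
      obtain ⟨x, hxI, hπx, hcase⟩ := pre_tri hfix htri hsI
      have hjm : 1 * 1 ≤ j * m := Nat.mul_le_mul hj hm
      rcases hcase with rfl | rfl | he
      · exact hπx
      · omega
      · have hx2 : π x = x + j * m := by omega
        have hxlt : x < s := by omega
        have := IH x hxlt hxI hx2 j hj le_rfl
        rw [← he] at this
        rw [hπs] at this
        have e1 := pred_mul m j hj
        omega
    | succ t ht1 ihQ =>
      intro ht1j
      simp only [Nat.add_sub_cancel]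
      have hQt : π (s + t * m) = s + (t - 1) * m := ihQ (by omega)
      have hsn : s + j * m ≤ n + j * m := by
        have := maps_Icc hfix hsI; rw [hπs, mem_Icc] at this; omega
      have htm : t * m ≤ j * m := Nat.mul_le_mul_right m (by omega)
      have ht1m : (t + 1) * m ≤ j * m := Nat.mul_le_mul_right m ht1j
      have e1 : (t + 1) * m = t * m + m := by rw [add_mul]; omega
      have hyI : s + t * m ∈ Finset.Icc 1 (n + j * m) := by
        rw [mem_Icc] at hsI ⊢; omega
      obtain ⟨x, hxI, hπx, hcase⟩ := pre_tri hfix htri hyI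
      have e2 := pred_mul m t (by omega)
      rcases hcase with rfl | rfl | he
      · have hx : s + t * m + m = s + (t + 1) * m := by omega
        rw [← hx]
        exact hπx
      · omega
      · -- s + t*m = x + j*m with x < s
        have hxlt : x < s := by omega
        have hx2 : π x = x + j * m := by omega
        have e3 := sub_mul_add m t j (by omega)
        have e4 := pred_mul m (j - t) (by omega)
        have hxs : x + (j - t) * m = s := by omega
        have := IH x hxlt hxI hx2 (j - t) (by omega) (by omega)
        rw [hxs] at this
        rw [hπs] at this
        omega

include hj hm hfix htri in
/-- Every point moved down lies on a cycle generated by an excedance. -/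
lemma down : ∀ d y, y ∈ Finset.Icc 1 (n + j * m) → n + j * m < y + d → π y + m = y →
    ∃ s t, s ∈ Finset.Icc 1 (n + j * m) ∧ π s = s + j * m ∧ 1 ≤ t ∧ t ≤ j ∧
      y = s + t * m := by
  intro d
  induction d with
  | zero => intro y hy hlt _; rw [mem_Icc] at hy; omega
  | succ d ih =>
    intro y hy hlt hdown
    obtain ⟨x, hxI, hπx, hcase⟩ := pre_tri hfix htri hy
    rcases hcase with rfl | rfl | he
    · -- π (y+m) = y, recurse upward
      have hd2 : π (y + m) + m = y + m := by omega
      obtain ⟨s, t, hsI, hπs, ht1, htj, heq⟩ := ih (y + m) hxI (by omega) hd2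
      rcases Nat.eq_or_lt_of_le ht1 with rfl | ht2
      · exfalso
        rw [one_mul] at heq
        have hys : y = s := by omega
        rw [hys] at hdown
        omega
      · have e2 := pred_mul m t (by omega)
        exact ⟨s, t - 1, hsI, hπs, by omega, by omega, by omega⟩
    · omega
    · exact ⟨x, j, hxI, by omega, hj, le_rfl, he⟩

include hj hm htri in
lemma exc_iff {i : ℕ} :
    i ∈ (Finset.Icc 1 (n + j * m)).filter (fun i => i < π i) ↔
      i ∈ Finset.Icc 1 (n + j * m) ∧ π i = i + j * m := by
  rw [mem_filter]
  have hjm : 1 * 1 ≤ j * m := Nat.mul_le_mul hj hm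
  constructor
  · rintro ⟨hi, hlt⟩
    refine ⟨hi, ?_⟩
    rcases htri i hi with h | h | h <;> omega
  · rintro ⟨hi, he⟩
    exact ⟨hi, by omega⟩

include hj hm hfix htri in
lemma converse_eq : ∀ x, fS j m ((Finset.Icc 1 (n + j * m)).filter (fun i => i < π i)) x
    = π x := by
  intro x
  set E := (Finset.Icc 1 (n + j * m)).filter (fun i => i < π i) with hE
  unfold fS
  split_ifs with h1 h2
  · rw [hE, exc_iff hj hm htri] at h1
    omega
  · obtain ⟨s, hs, t, ht, rfl⟩ := h2
    rw [hE, exc_iff hj hm htri] at hs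
    rw [mem_Icc] at ht
    have := cyc hj hm hfix htri s hs.1 hs.2 t ht.1 ht.2
    have e2 := pred_mul m t ht.1
    omega
  · by_contra hc
    have hne : π x ≠ x := fun h => hc h.symm
    have hxI := mem_of_move hfix hne
    rcases htri x hxI with h | h | h
    · obtain ⟨s, t, hsI, hπs, ht1, htj, heq⟩ :=
        down hj hm hfix htri (n + j * m) x hxI (by rw [mem_Icc] at hxI; omega) h
      refine h2 ⟨s, ?_, t, mem_Icc.2 ⟨ht1, htj⟩, heq⟩
      rw [hE, exc_iff hj hm htri]
      exact ⟨hsI, hπs⟩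
    · exact hne h
    · refine h1 ?_
      rw [hE, exc_iff hj hm htri]
      exact ⟨hxI, h⟩

include hj hm hfix htri in
lemma E_subset : (Finset.Icc 1 (n + j * m)).filter (fun i => i < π i) ⊆
    Finset.Icc 1 n := by
  intro i hi
  rw [exc_iff hj hm htri] at hi
  obtain ⟨hiI, he⟩ := hi
  have := maps_Icc hfix hiI
  rw [he, mem_Icc] at this
  rw [mem_Icc] at hiI ⊢
  omega

include hj hm hfix htri in
lemma E_avoid : ∀ a ∈ (Finset.Icc 1 (n + j * m)).filter (fun i => i < π i),
    ∀ b ∈ (Finset.Icc 1 (n + j * m)).filter (fun i => i < π i),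
    b < a → ∀ t, 1 ≤ t → t ≤ j → a ≠ b + t * m := by
  intro a ha b hb _ t ht1 htj heq
  rw [exc_iff hj hm htri] at ha hb
  have := cyc hj hm hfix htri b hb.1 hb.2 t ht1 htj
  rw [← heq] at this
  rw [ha.2] at this
  have e2 := pred_mul m t ht1
  have hjm : 1 * 1 ≤ j * m := Nat.mul_le_mul hj hm
  omega

end Converse

end Stmt6
/-- bijection between `k`-subsets of `{1,…,n}` avoiding differences in
`{m,2m,…,jm}` and permutations `π` of `{1,…,n+jm}` with `π(i)-i ∈ {-m,0,jm}`
having exactly `k` excedances. -/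
theorem stmt_6 (j m n k : ℕ) (hj : 1 ≤ j) (hm : 1 ≤ m) :
    restrictedCountK ((Finset.Icc 1 j).image fun i => i * m) n k =
      Nat.card {π : Equiv.Perm ℕ //
        (∀ x : ℕ, x ∉ Finset.Icc 1 (n + j * m) → π x = x) ∧
        (∀ i ∈ Finset.Icc 1 (n + j * m),
          (π i : ℤ) - i = -(m : ℤ) ∨ (π i : ℤ) - i = 0 ∨ (π i : ℤ) - i = (j : ℤ) * m) ∧
        ((Finset.Icc 1 (n + j * m)).filter fun i => i < π i).card = k} := by
  classical
  -- translate the avoidance condition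
  have havoid_iff : ∀ S : Finset ℕ,
      (∀ a ∈ S, ∀ b ∈ S, b < a → a - b ∉ (Finset.Icc 1 j).image fun i => i * m) ↔
      (∀ a ∈ S, ∀ b ∈ S, b < a → ∀ t, 1 ≤ t → t ≤ j → a ≠ b + t * m) := by
    intro S
    constructor
    · intro h a ha b hb hba t ht1 htj heq
      refine h a ha b hb hba ?_
      rw [Finset.mem_image]
      exact ⟨t, Finset.mem_Icc.2 ⟨ht1, htj⟩, by omega⟩
    · intro h a ha b hb hba hmem
      rw [Finset.mem_image] at hmem
      obtain ⟨t, ht, he⟩ := hmem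
      rw [Finset.mem_Icc] at ht
      exact h a ha b hb hba t ht.1 ht.2 (by omega)
  -- membership decoding for the left-hand side finset
  have memF_iff : ∀ S : Finset ℕ,
      S ∈ (Finset.Icc 1 n).powerset.filter
        (fun s => s.card = k ∧ ∀ a ∈ s, ∀ b ∈ s, b < a →
          a - b ∉ (Finset.Icc 1 j).image fun i => i * m) ↔
      (S ⊆ Finset.Icc 1 n ∧ S.card = k ∧
        ∀ a ∈ S, ∀ b ∈ S, b < a → ∀ t, 1 ≤ t → t ≤ j → a ≠ b + t * m) := by
    intro S
    rw [Finset.mem_filter, Finset.mem_powerset, havoid_iff S]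
  -- converting the displacement condition to a `ℕ` trichotomy
  have htri_of : ∀ π : Equiv.Perm ℕ,
      (∀ i ∈ Finset.Icc 1 (n + j * m),
        (π i : ℤ) - i = -(m : ℤ) ∨ (π i : ℤ) - i = 0 ∨ (π i : ℤ) - i = (j : ℤ) * m) →
      ∀ i ∈ Finset.Icc 1 (n + j * m), π i + m = i ∨ π i = i ∨ π i = i + j * m := by
    intro π hdisp i hi
    have hc : ((j * m : ℕ) : ℤ) = (j : ℤ) * m := by push_cast; ring
    rcases hdisp i hi with h | h | h
    · left; omega
    · right; left; omega
    · right; right; omega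
  -- forward: the properties of the constructed permutation
  have hprop : ∀ S : Finset ℕ,
      S ∈ (Finset.Icc 1 n).powerset.filter
        (fun s => s.card = k ∧ ∀ a ∈ s, ∀ b ∈ s, b < a →
          a - b ∉ (Finset.Icc 1 j).image fun i => i * m) →
      ∀ π : Equiv.Perm ℕ, (∀ x, π x = Stmt6.fS j m S x) →
      ((∀ x : ℕ, x ∉ Finset.Icc 1 (n + j * m) → π x = x) ∧
        (∀ i ∈ Finset.Icc 1 (n + j * m),
          (π i : ℤ) - i = -(m : ℤ) ∨ (π i : ℤ) - i = 0 ∨ (π i : ℤ) - i = (j : ℤ) * m) ∧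
        ((Finset.Icc 1 (n + j * m)).filter fun i => i < π i).card = k) := by
    intro S hS π hπ
    obtain ⟨hsub, hcard, hA⟩ := (memF_iff S).1 hS
    refine ⟨?_, ?_, ?_⟩
    · intro x hx
      rw [hπ x]
      exact Stmt6.fS_fix hsub hx
    · intro i hi
      rw [hπ i]
      exact Stmt6.fS_disp hsub hi
    · simp only [hπ]
      rw [Stmt6.fS_exc hj hm hsub, hcard]
  -- converse: excedance set of a valid permutation is a valid subset
  have hmemF : ∀ π : Equiv.Perm ℕ,
      ((∀ x : ℕ, x ∉ Finset.Icc 1 (n + j * m) → π x = x) ∧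
        (∀ i ∈ Finset.Icc 1 (n + j * m),
          (π i : ℤ) - i = -(m : ℤ) ∨ (π i : ℤ) - i = 0 ∨ (π i : ℤ) - i = (j : ℤ) * m) ∧
        ((Finset.Icc 1 (n + j * m)).filter fun i => i < π i).card = k) →
      ((Finset.Icc 1 (n + j * m)).filter fun i => i < π i) ∈
        (Finset.Icc 1 n).powerset.filter
        (fun s => s.card = k ∧ ∀ a ∈ s, ∀ b ∈ s, b < a →
          a - b ∉ (Finset.Icc 1 j).image fun i => i * m) := by
    rintro π ⟨hfix, hdisp, hcard⟩
    have htri := htri_of π hdisp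
    rw [memF_iff]
    exact ⟨Stmt6.E_subset hj hm hfix htri, hcard, Stmt6.E_avoid hj hm hfix htri⟩
  rw [restrictedCountK, ← Nat.card_eq_finsetCard]
  apply Nat.card_congr
  refine ⟨fun Sp =>
      ⟨⟨Stmt6.fS j m Sp.1, Stmt6.gS j m Sp.1,
          Stmt6.gf hj hm ((memF_iff Sp.1).1 Sp.2).2.2,
          Stmt6.fg hj hm ((memF_iff Sp.1).1 Sp.2).2.2⟩,
        hprop Sp.1 Sp.2 _ (fun _ => rfl)⟩,
    fun πp => ⟨(Finset.Icc 1 (n + j * m)).filter (fun i => i < πp.1 i),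
      hmemF πp.1 πp.2⟩, ?_, ?_⟩
  · -- left inverse
    rintro ⟨S, hS⟩
    obtain ⟨hsub, hcard, hA⟩ := (memF_iff S).1 hS
    apply Subtype.ext
    simp only [Equiv.coe_fn_mk]
    exact Stmt6.fS_exc hj hm hsub
  · -- right inverse
    rintro ⟨π, hP⟩
    obtain ⟨hfix, hdisp, hcard⟩ := hP
    have htri := htri_of π hdisp
    apply Subtype.ext
    apply Equiv.ext
    intro x
    simp only [Equiv.coe_fn_mk]
    exact Stmt6.converse_eq hj hm hfix htri x
end

section
/- Let j ≥ 1, m ≥ 1 and n ≥ 0 be integers. The number of permutations π of {1,…,n+jm} satisfying π(i) − i ∈ {−m, 0, jm} for all i ∈ {1,…,n+jm} equals the number of subsets S of {1,…,n} such that no two elements of S differ by an element of Q = {m, 2m, …, jm}. -/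
open Finset

lemma pred_mul (m : ℕ) {t : ℕ} (ht : 1 ≤ t) : (t - 1) * m + m = t * m := by
  cases t with
  | zero => omega
  | succ t => simp [Nat.succ_sub_one, Nat.succ_mul]

def Good (j m : ℕ) (S : Finset ℕ) : Prop :=
  ∀ i ∈ S, ∀ i' ∈ S, ∀ k ≤ j, ∀ k' ≤ j, i + k * m = i' + k' * m → i = i' ∧ k = k'

def fwd (j m : ℕ) (S : Finset ℕ) (x : ℕ) : ℕ :=
  if x ∈ S then x + j * m
  else if ∃ i ∈ S, ∃ k ∈ Finset.Icc 1 j, x = i + k * m then x - m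
  else x

def bwd (j m : ℕ) (S : Finset ℕ) (y : ℕ) : ℕ :=
  if ∃ i ∈ S, y = i + j * m then y - j * m
  else if ∃ i ∈ S, ∃ k ∈ Finset.Icc 1 j, y + m = i + k * m then y + m
  else y

lemma bwd_fwd {j m : ℕ} (hj : 1 ≤ j) (hm : 1 ≤ m) {S : Finset ℕ} (hS : Good j m S)
    (x : ℕ) : bwd j m S (fwd j m S x) = x := by
  unfold fwd
  split_ifs with h1 h2
  · unfold bwd
    split_ifs with g1 g2
    · omega
    · exact absurd ⟨x, h1, rfl⟩ g1
    · exact absurd ⟨x, h1, rfl⟩ g1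
  · obtain ⟨i, hi, k, hk, rfl⟩ := h2
    simp only [mem_Icc] at hk
    have pm := pred_mul m hk.1
    have hx : i + k * m - m = i + (k - 1) * m := by omega
    rw [hx]
    unfold bwd
    split_ifs with g1 g2
    · exfalso
      obtain ⟨i', hi', he⟩ := g1
      obtain ⟨hii, hkk⟩ := hS i hi i' hi' (k - 1) (by omega) j le_rfl he
      omega
    · omega
    · exact absurd ⟨i, hi, k, mem_Icc.2 ⟨hk.1, hk.2⟩, by omega⟩ g2
  · unfold bwd
    split_ifs with g1 g2
    · exact absurd ⟨_, g1.choose_spec.1, j, mem_Icc.2 ⟨hj, le_rfl⟩, g1.choose_spec.2⟩ h2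
    · exfalso
      obtain ⟨i, hi, k, hk, he⟩ := g2
      simp only [mem_Icc] at hk
      have pm := pred_mul m hk.1
      rcases Nat.eq_or_lt_of_le hk.1 with h | h
      · obtain rfl : k = 1 := h.symm
        apply h1
        have hxi : x = i := by omega
        rwa [hxi]
      · exact h2 ⟨i, hi, k - 1, mem_Icc.2 ⟨by omega, by omega⟩, by omega⟩
    · rfl

lemma fwd_bwd {j m : ℕ} (hj : 1 ≤ j) (hm : 1 ≤ m) {S : Finset ℕ} (hS : Good j m S)
    (y : ℕ) : fwd j m S (bwd j m S y) = y := by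
  unfold bwd
  split_ifs with g1 g2
  · obtain ⟨i, hi, rfl⟩ := g1
    have he : i + j * m - j * m = i := by omega
    rw [he]
    unfold fwd
    rw [if_pos hi]
  · obtain ⟨i, hi, k, hk, he⟩ := g2
    simp only [mem_Icc] at hk
    have pm := pred_mul m hk.1
    unfold fwd
    split_ifs with f1 f2
    · exfalso
      have := hS (y + m) f1 i hi 0 (Nat.zero_le j) k hk.2 (by omega)
      omega
    · omega
    · exact absurd ⟨i, hi, k, mem_Icc.2 hk, he⟩ f2
  · unfold fwd
    split_ifs with f1 f2
    · exact absurd ⟨y, f1, 1, mem_Icc.2 ⟨le_rfl, hj⟩, by omega⟩ g2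
    · exfalso
      obtain ⟨i, hi, k, hk, rfl⟩ := f2
      simp only [mem_Icc] at hk
      by_cases hkj : k = j
      · exact g1 ⟨i, hi, by rw [hkj]⟩
      · have hsm : (k + 1) * m = k * m + m := Nat.succ_mul k m
        exact g2 ⟨i, hi, k + 1, mem_Icc.2 ⟨by omega, by omega⟩, by omega⟩
    · rfl

def chainPerm (j m : ℕ) (hj : 1 ≤ j) (hm : 1 ≤ m) (S : Finset ℕ) (hS : Good j m S) :
    Equiv.Perm ℕ :=
  ⟨fwd j m S, bwd j m S, bwd_fwd hj hm hS, fwd_bwd hj hm hS⟩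

section PiSide

variable {j m n : ℕ} {π : Equiv.Perm ℕ}

lemma maps_Icc (hfix : ∀ x ∉ Icc 1 (n + j * m), π x = x) :
    ∀ x ∈ Icc 1 (n + j * m), π x ∈ Icc 1 (n + j * m) := by
  intro x hx
  by_contra h
  have h2 : π (π x) = π x := hfix _ h
  have h3 : π x = x := π.injective h2
  rw [h3] at h
  exact h hx

lemma chain (hj : 1 ≤ j) (hm : 1 ≤ m)
    (hfix : ∀ x ∉ Icc 1 (n + j * m), π x = x)
    (hmv : ∀ i ∈ Icc 1 (n + j * m), π i + m = i ∨ π i = i ∨ π i = i + j * m) :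
    ∀ x, π x = x + j * m → ∀ t, 1 ≤ t → t ≤ j → π (x + t * m) = x + (t - 1) * m := by
  have hjm : 1 ≤ j * m := Nat.mul_pos hj hm
  suffices H : ∀ d x, n + j * m ≤ x + d → π x = x + j * m →
      ∀ t, 1 ≤ t → t ≤ j → π (x + t * m) = x + (t - 1) * m by
    intro x hx
    exact H (n + j * m) x (by omega) hx
  intro d
  induction d using Nat.strong_induction_on with
  | _ d ih =>
  intro x hxd hx
  have hxI : x ∈ Icc 1 (n + j * m) := by
    by_contra h
    have := hfix x h
    omega
  have hxN : x + j * m ≤ n + j * m := by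
    have h := maps_Icc hfix x hxI
    simp only [mem_Icc] at h
    omega
  simp only [mem_Icc] at hxI
  have inner : ∀ u t, t + u = j → 1 ≤ t → π (x + t * m) = x + (t - 1) * m := by
    intro u
    induction u with
    | zero =>
      intro t htu ht1
      have htj : t = j := by omega
      have htm : t * m = j * m := by rw [htj]
      have pm := pred_mul m ht1
      have hmem : x + t * m ∈ Icc 1 (n + j * m) := by simp only [mem_Icc]; omega
      rcases hmv (x + t * m) hmem with h | h | h
      · omega
      · have he : π x = π (x + t * m) := by rw [hx, h]; omega
        have := π.injective he
        omega
      · have hlt : n + j * m - (x + t * m) < d := by omega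
        have h1m := ih _ hlt (x + t * m) (by omega) h 1 le_rfl hj
        norm_num at h1m
        have he : π (x + t * m + m) = π x := by rw [h1m, hx]; omega
        have := π.injective he
        omega
    | succ u ihu =>
      intro t htu ht1
      have hprev := ihu (t + 1) (by omega) (by omega)
      have hsm : (t + 1) * m = t * m + m := Nat.succ_mul t m
      have hprev' : π (x + t * m + m) = x + t * m := by
        have e : x + (t + 1) * m = x + t * m + m := by omega
        rw [e] at hprev
        simpa using hprev
      have pm := pred_mul m ht1
      have htm : t * m ≤ j * m := Nat.mul_le_mul_right m (by omega)
      have hmem : x + t * m ∈ Icc 1 (n + j * m) := by simp only [mem_Icc]; omega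
      rcases hmv (x + t * m) hmem with h | h | h
      · omega
      · have := π.injective (hprev'.trans h.symm)
        omega
      · have hs1 : 1 ≤ j + 1 - t := by omega
        have hsj : j + 1 - t ≤ j := by omega
        have hts : t + (j + 1 - t) = j + 1 := by omega
        have a1 : (t + (j + 1 - t)) * m = t * m + (j + 1 - t) * m := Nat.add_mul _ _ _
        rw [hts] at a1
        have a2 : (j + 1) * m = j * m + 1 * m := Nat.add_mul _ _ _
        have a3 : (t + (j + 1 - t - 1)) * m = t * m + (j + 1 - t - 1) * m := Nat.add_mul _ _ _
        have hts2 : t + (j + 1 - t - 1) = j := by omega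
        rw [hts2] at a3
        have hlt : n + j * m - (x + t * m) < d := by omega
        have hrec := ih _ hlt (x + t * m) (by omega) h (j + 1 - t) hs1 hsj
        have he : π (x + t * m + (j + 1 - t) * m) = π x := by rw [hrec, hx]; omega
        have := π.injective he
        omega
  intro t ht1 htj
  exact inner (j - t) t (by omega) ht1

lemma core (hj : 1 ≤ j) (hm : 1 ≤ m)
    (hfix : ∀ x ∉ Icc 1 (n + j * m), π x = x)
    (hmv : ∀ i ∈ Icc 1 (n + j * m), π i + m = i ∨ π i = i ∨ π i = i + j * m)
    {i i' k k' : ℕ} (hi : π i = i + j * m) (hi' : π i' = i' + j * m)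
    (hlt : i < i') (hk : k ≤ j) (hk' : k' ≤ j) (he : i + k * m = i' + k' * m) : False := by
  have hkk : k' < k := by
    by_contra h
    have : k * m ≤ k' * m := Nat.mul_le_mul_right m (by omega)
    omega
  have a1 : (k' + (k - k')) * m = k' * m + (k - k') * m := Nat.add_mul _ _ _
  have hkt : k' + (k - k') = k := by omega
  rw [hkt] at a1
  have hi'e : i' = i + (k - k') * m := by omega
  have hc := chain hj hm hfix hmv i hi (k - k') (by omega) (by omega)
  rw [← hi'e] at hc
  have pm := pred_mul m (show 1 ≤ k - k' by omega)
  have hjm : 1 ≤ j * m := Nat.mul_pos hj hm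
  omega

end PiSide

def Sset (j m n : ℕ) (π : Equiv.Perm ℕ) : Finset ℕ :=
  (Icc 1 n).filter (fun i => π i = i + j * m)

section PiSide2

variable {j m n : ℕ} {π : Equiv.Perm ℕ}

lemma A_eq_Sset (hj : 1 ≤ j) (hm : 1 ≤ m)
    (hfix : ∀ x ∉ Icc 1 (n + j * m), π x = x) :
    (Icc 1 (n + j * m)).filter (fun x => π x = x + j * m) = Sset j m n π := by
  ext x
  simp only [Sset, mem_filter, mem_Icc]
  constructor
  · rintro ⟨⟨h1, h2⟩, h3⟩
    refine ⟨⟨h1, ?_⟩, h3⟩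
    have h := maps_Icc hfix x (mem_Icc.2 ⟨h1, h2⟩)
    simp only [mem_Icc] at h
    omega
  · rintro ⟨⟨h1, h2⟩, h3⟩
    exact ⟨⟨h1, by omega⟩, h3⟩

lemma Sset_good (hj : 1 ≤ j) (hm : 1 ≤ m)
    (hfix : ∀ x ∉ Icc 1 (n + j * m), π x = x)
    (hmv : ∀ i ∈ Icc 1 (n + j * m), π i + m = i ∨ π i = i ∨ π i = i + j * m) :
    Good j m (Sset j m n π) := by
  intro i hi i' hi' k hk k' hk' he
  simp only [Sset, mem_filter, mem_Icc] at hi hi'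
  rcases lt_trichotomy i i' with h | h | h
  · exact (core hj hm hfix hmv hi.2 hi'.2 h hk hk' he).elim
  · subst h
    have hkm : k * m = k' * m := by omega
    exact ⟨rfl, Nat.eq_of_mul_eq_mul_right hm hkm⟩
  · exact (core hj hm hfix hmv hi'.2 hi.2 h hk' hk he.symm).elim

lemma B_eq_C (hj : 1 ≤ j) (hm : 1 ≤ m)
    (hfix : ∀ x ∉ Icc 1 (n + j * m), π x = x)
    (hmv : ∀ i ∈ Icc 1 (n + j * m), π i + m = i ∨ π i = i ∨ π i = i + j * m) :
    (Icc 1 (n + j * m)).filter (fun x => π x + m = x)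
      = (Sset j m n π).biUnion (fun i => (Icc 1 j).image (fun k => i + k * m)) := by
  classical
  have himg : (Icc 1 (n + j * m)).image π = Icc 1 (n + j * m) := by
    apply Finset.eq_of_subset_of_card_le
    · intro y hy
      obtain ⟨x, hx, rfl⟩ := Finset.mem_image.1 hy
      exact maps_Icc hfix x hx
    · rw [Finset.card_image_of_injective _ π.injective]
  have hsum : ∑ x ∈ Icc 1 (n + j * m), ((π x : ℤ) - x) = 0 := by
    have h1 : (∑ x ∈ Icc 1 (n + j * m), (π x : ℤ)) = ∑ x ∈ Icc 1 (n + j * m), (x : ℤ) := by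
      conv_rhs => rw [← himg]
      rw [Finset.sum_image (fun a _ b _ h => π.injective h)]
    rw [Finset.sum_sub_distrib, h1, sub_self]
  have hterm : ∀ x ∈ Icc 1 (n + j * m),
      ((π x : ℤ) - x) = ((j * m : ℕ) : ℤ) * (if π x = x + j * m then (1 : ℤ) else 0)
        - ((m : ℕ) : ℤ) * (if π x + m = x then (1 : ℤ) else 0) := by
    intro x hx
    rcases hmv x hx with h | h | h <;> split_ifs <;> push_cast <;> omega
  rw [Finset.sum_congr rfl hterm, Finset.sum_sub_distrib, ← Finset.mul_sum, ← Finset.mul_sum,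
    Finset.sum_boole, Finset.sum_boole] at hsum
  have hm0 : ((m : ℕ) : ℤ) ≠ 0 := by exact_mod_cast (by omega : m ≠ 0)
  have hcard : ((Icc 1 (n + j * m)).filter (fun x => π x + m = x)).card
      = j * ((Icc 1 (n + j * m)).filter (fun x => π x = x + j * m)).card := by
    have h2 : ((m : ℤ)) * (((Icc 1 (n + j * m)).filter (fun x => π x + m = x)).card : ℤ)
        = (m : ℤ) * ((j : ℤ) * (((Icc 1 (n + j * m)).filter (fun x => π x = x + j * m)).card : ℤ)) := by
      push_cast at hsum ⊢
      nlinarith [hsum]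
    have h3 := mul_left_cancel₀ hm0 h2
    exact_mod_cast h3
  have hdisj : ∀ i₁ ∈ (Icc 1 (n + j * m)).filter (fun x => π x = x + j * m),
      ∀ i₂ ∈ (Icc 1 (n + j * m)).filter (fun x => π x = x + j * m), i₁ ≠ i₂ →
      Disjoint ((Icc 1 j).image (fun k => i₁ + k * m)) ((Icc 1 j).image (fun k => i₂ + k * m)) := by
    intro i₁ h₁ i₂ h₂ hne
    simp only [mem_filter, mem_Icc] at h₁ h₂
    rw [Finset.disjoint_left]
    rintro a ha hb
    simp only [mem_image, mem_Icc] at ha hb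
    obtain ⟨k₁, hk₁, he₁⟩ := ha
    obtain ⟨k₂, hk₂, he₂⟩ := hb
    rcases lt_trichotomy i₁ i₂ with h | h | h
    · exact core hj hm hfix hmv h₁.2 h₂.2 h hk₁.2 hk₂.2 (he₁.trans he₂.symm)
    · exact hne h
    · exact core hj hm hfix hmv h₂.2 h₁.2 h hk₂.2 hk₁.2 (he₂.trans he₁.symm)
  have hCcard : (((Icc 1 (n + j * m)).filter (fun x => π x = x + j * m)).biUnion
      (fun i => (Icc 1 j).image (fun k => i + k * m))).card
      = j * ((Icc 1 (n + j * m)).filter (fun x => π x = x + j * m)).card := by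
    rw [Finset.card_biUnion hdisj]
    have hc : ∀ i ∈ (Icc 1 (n + j * m)).filter (fun x => π x = x + j * m),
        ((Icc 1 j).image (fun k => i + k * m)).card = j := by
      intro i _
      rw [Finset.card_image_of_injOn, Nat.card_Icc]
      · omega
      · intro k₁ _ k₂ _ he
        have he' : i + k₁ * m = i + k₂ * m := he
        have hkm : k₁ * m = k₂ * m := by omega
        exact Nat.eq_of_mul_eq_mul_right hm hkm
    rw [Finset.sum_congr rfl hc, Finset.sum_const, smul_eq_mul, Nat.mul_comm]
  have hCB : (((Icc 1 (n + j * m)).filter (fun x => π x = x + j * m)).biUnion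
      (fun i => (Icc 1 j).image (fun k => i + k * m)))
      ⊆ (Icc 1 (n + j * m)).filter (fun x => π x + m = x) := by
    intro x hx
    simp only [mem_biUnion, mem_image, mem_Icc] at hx
    obtain ⟨i, hiA, k, hk, rfl⟩ := hx
    have hiA' := hiA
    simp only [mem_filter, mem_Icc] at hiA'
    have hc := chain hj hm hfix hmv i hiA'.2 k hk.1 hk.2
    have pm := pred_mul m hk.1
    have hmapsi := maps_Icc hfix i (mem_Icc.2 hiA'.1)
    simp only [mem_Icc] at hmapsi
    have hkj : k * m ≤ j * m := Nat.mul_le_mul_right m hk.2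
    simp only [mem_filter, mem_Icc]
    refine ⟨⟨by omega, by omega⟩, by omega⟩
  have hfin := Finset.eq_of_subset_of_card_le hCB (by omega)
  rw [← hfin, A_eq_Sset hj hm hfix]

end PiSide2

section PiSide3

variable {j m n : ℕ} {π : Equiv.Perm ℕ}

lemma pi_eq_fwd (hj : 1 ≤ j) (hm : 1 ≤ m)
    (hfix : ∀ x ∉ Icc 1 (n + j * m), π x = x)
    (hmv : ∀ i ∈ Icc 1 (n + j * m), π i + m = i ∨ π i = i ∨ π i = i + j * m) :
    ∀ x, π x = fwd j m (Sset j m n π) x := by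
  intro x
  have hBC := B_eq_C hj hm hfix hmv
  unfold fwd
  split_ifs with h1 h2
  · simp only [Sset, mem_filter] at h1
    exact h1.2
  · obtain ⟨i, hi, k, hk, rfl⟩ := h2
    simp only [Sset, mem_filter, mem_Icc] at hi
    simp only [mem_Icc] at hk
    have hc := chain hj hm hfix hmv i hi.2 k hk.1 hk.2
    have pm := pred_mul m hk.1
    omega
  · by_cases hx : x ∈ Icc 1 (n + j * m)
    · rcases hmv x hx with h | h | h
      · exfalso
        have hxB : x ∈ (Icc 1 (n + j * m)).filter (fun x => π x + m = x) :=
          mem_filter.2 ⟨hx, h⟩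
        rw [hBC] at hxB
        simp only [mem_biUnion, mem_image] at hxB
        obtain ⟨i, hi, k, hk, he⟩ := hxB
        exact h2 ⟨i, hi, k, hk, he.symm⟩
      · exact h
      · exfalso
        apply h1
        simp only [Sset, mem_filter, mem_Icc]
        have hmaps := maps_Icc hfix x hx
        simp only [mem_Icc] at hmaps hx
        exact ⟨⟨hx.1, by omega⟩, h⟩
    · rw [hfix x hx]

end PiSide3

lemma Sset_fwd {j m n : ℕ} (hj : 1 ≤ j) (hm : 1 ≤ m) {S : Finset ℕ}
    (hS : Good j m S) (hsub : S ⊆ Icc 1 n) :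
    Sset j m n (chainPerm j m hj hm S hS) = S := by
  have hjm : 1 ≤ j * m := Nat.mul_pos hj hm
  ext x
  simp only [Sset, mem_filter, mem_Icc]
  constructor
  · rintro ⟨hx, he⟩
    have he' : fwd j m S x = x + j * m := he
    unfold fwd at he'
    split_ifs at he' with h1 h2
    · exact h1
    · exfalso
      obtain ⟨i, hi, k, hk, rfl⟩ := h2
      simp only [mem_Icc] at hk
      have pm := pred_mul m hk.1
      omega
    · omega
  · intro hx
    have h := hsub hx
    simp only [mem_Icc] at h
    refine ⟨h, ?_⟩
    show fwd j m S x = x + j * m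
    unfold fwd
    rw [if_pos hx]

lemma goodF_iff {j m n : ℕ} (hm : 1 ≤ m) (S : Finset ℕ) :
    (S ∈ (Finset.Icc 1 n).powerset.filter
      (fun s => ∀ a ∈ s, ∀ b ∈ s, b < a → a - b ∉ (Finset.Icc 1 j).image (fun i => i * m)))
    ↔ (S ⊆ Icc 1 n ∧ Good j m S) := by
  simp only [mem_filter, mem_powerset]
  constructor
  · rintro ⟨hsub, hcond⟩
    refine ⟨hsub, ?_⟩
    intro i hi i' hi' k hk k' hk' he
    rcases lt_trichotomy i i' with h | h | h
    · exfalso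
      have hkk : k' < k := by
        by_contra hc
        have : k * m ≤ k' * m := Nat.mul_le_mul_right m (by omega)
        omega
      have a1 : (k' + (k - k')) * m = k' * m + (k - k') * m := Nat.add_mul _ _ _
      have hkt : k' + (k - k') = k := by omega
      rw [hkt] at a1
      apply hcond i' hi' i hi h
      exact mem_image.2 ⟨k - k', mem_Icc.2 ⟨by omega, by omega⟩, by omega⟩
    · subst h
      have hkm : k * m = k' * m := by omega
      exact ⟨rfl, Nat.eq_of_mul_eq_mul_right hm hkm⟩
    · exfalso
      have hkk : k < k' := by
        by_contra hc
        have : k' * m ≤ k * m := Nat.mul_le_mul_right m (by omega)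
        omega
      have a1 : (k + (k' - k)) * m = k * m + (k' - k) * m := Nat.add_mul _ _ _
      have hkt : k + (k' - k) = k' := by omega
      rw [hkt] at a1
      apply hcond i hi i' hi' h
      exact mem_image.2 ⟨k' - k, mem_Icc.2 ⟨by omega, by omega⟩, by omega⟩
  · rintro ⟨hsub, hGood⟩
    refine ⟨hsub, ?_⟩
    intro a ha b hb hba hmem
    obtain ⟨k, hk, hkm⟩ := mem_image.1 hmem
    simp only [mem_Icc] at hk
    have hab : b + k * m = a + 0 * m := by omega
    obtain ⟨h1, h2⟩ := hGood b hb a ha k hk.2 0 (Nat.zero_le j) hab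
    omega

lemma chainPerm_fix {j m n : ℕ} (hj : 1 ≤ j) (hm : 1 ≤ m) {S : Finset ℕ}
    (hS : Good j m S) (hsub : S ⊆ Icc 1 n) :
    ∀ x ∉ Icc 1 (n + j * m), chainPerm j m hj hm S hS x = x := by
  intro x hx
  show fwd j m S x = x
  unfold fwd
  split_ifs with h1 h2
  · exfalso
    have h := hsub h1
    simp only [mem_Icc] at h
    exact hx (mem_Icc.2 ⟨h.1, by omega⟩)
  · exfalso
    obtain ⟨i, hi, k, hk, rfl⟩ := h2
    have h := hsub hi
    simp only [mem_Icc] at h hk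
    have hkj : k * m ≤ j * m := Nat.mul_le_mul_right m hk.2
    exact hx (mem_Icc.2 ⟨by omega, by omega⟩)
  · rfl

lemma chainPerm_mv {j m n : ℕ} (hj : 1 ≤ j) (hm : 1 ≤ m) {S : Finset ℕ}
    (hS : Good j m S) (hsub : S ⊆ Icc 1 n) :
    ∀ i ∈ Icc 1 (n + j * m),
      ((chainPerm j m hj hm S hS i : ℤ) - i = -(m : ℤ) ∨
       (chainPerm j m hj hm S hS i : ℤ) - i = 0 ∨
       (chainPerm j m hj hm S hS i : ℤ) - i = (j : ℤ) * m) := by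
  intro x _
  have hc : ((j * m : ℕ) : ℤ) = (j : ℤ) * m := by push_cast; ring
  have hconv : chainPerm j m hj hm S hS x = fwd j m S x := rfl
  rw [hconv]
  unfold fwd
  split_ifs with h1 h2
  · right; right; omega
  · left
    obtain ⟨i, hi, k, hk, rfl⟩ := h2
    simp only [mem_Icc] at hk
    have pm := pred_mul m hk.1
    omega
  · right; left; omega

/-- the number of permutations `π` of `{1,…,n+jm}` with
`π(i)-i ∈ {-m,0,jm}` equals the number of subsets of `{1,…,n}` avoiding
differences in `{m,2m,…,jm}`. -/
theorem stmt_7 (j m n : ℕ) (hj : 1 ≤ j) (hm : 1 ≤ m) :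
    Nat.card {π : Equiv.Perm ℕ //
        (∀ x : ℕ, x ∉ Finset.Icc 1 (n + j * m) → π x = x) ∧
        (∀ i ∈ Finset.Icc 1 (n + j * m),
          (π i : ℤ) - i = -(m : ℤ) ∨ (π i : ℤ) - i = 0 ∨ (π i : ℤ) - i = (j : ℤ) * m)} =
      restrictedCount ((Finset.Icc 1 j).image fun i => i * m) n := by
  classical
  have hc : ((j * m : ℕ) : ℤ) = (j : ℤ) * m := by push_cast; ring
  have hmv_of : ∀ (π : Equiv.Perm ℕ),
      (∀ i ∈ Finset.Icc 1 (n + j * m),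
        (π i : ℤ) - i = -(m : ℤ) ∨ (π i : ℤ) - i = 0 ∨ (π i : ℤ) - i = (j : ℤ) * m) →
      ∀ i ∈ Icc 1 (n + j * m), π i + m = i ∨ π i = i ∨ π i = i + j * m := by
    intro π h i hi
    rcases h i hi with h' | h' | h'
    · left; omega
    · right; left; omega
    · right; right; omega
  have e : {π : Equiv.Perm ℕ //
        (∀ x : ℕ, x ∉ Finset.Icc 1 (n + j * m) → π x = x) ∧
        (∀ i ∈ Finset.Icc 1 (n + j * m),
          (π i : ℤ) - i = -(m : ℤ) ∨ (π i : ℤ) - i = 0 ∨ (π i : ℤ) - i = (j : ℤ) * m)} ≃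
      {S : Finset ℕ // S ∈ (Finset.Icc 1 n).powerset.filter
        (fun s => ∀ a ∈ s, ∀ b ∈ s, b < a → a - b ∉ (Finset.Icc 1 j).image (fun i => i * m))} :=
    { toFun := fun p => ⟨Sset j m n p.1,
        (goodF_iff hm _).2 ⟨Finset.filter_subset _ _,
          Sset_good hj hm p.2.1 (hmv_of p.1 p.2.2)⟩⟩,
      invFun := fun s => ⟨chainPerm j m hj hm s.1 ((goodF_iff hm s.1).1 s.2).2,
        chainPerm_fix hj hm ((goodF_iff hm s.1).1 s.2).2 ((goodF_iff hm s.1).1 s.2).1,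
        chainPerm_mv hj hm ((goodF_iff hm s.1).1 s.2).2 ((goodF_iff hm s.1).1 s.2).1⟩,
      left_inv := fun p => Subtype.ext
        (Equiv.ext fun x => (pi_eq_fwd hj hm p.2.1 (hmv_of p.1 p.2.2) x).symm),
      right_inv := fun s => Subtype.ext
        (Sset_fwd hj hm ((goodF_iff hm s.1).1 s.2).2 ((goodF_iff hm s.1).1 s.2).1) }
  rw [Nat.card_congr e, Nat.card_eq_finsetCard]
  rfl
end

section
/- Let m ≥ 1, j ≥ 1, i ≥ 0 and 0 ≤ r ≤ m−1 be integers. The number of permutations π of {1,…,im+r} satisfying π(s) − s ∈ {−m, 0, jm} for all s equals (f^{(j+1)}_i)^{m−r} · (f^{(j+1)}_{i+1})^r. -/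
/-- The `(1,t)`-bonacci numbers `f^{(t)}_n`, satisfying
`f^{(t)}_n = f^{(t)}_{n-1} + f^{(t)}_{n-t} + δ_{n,0}` with `f^{(t)}_{n<0} = 0`
(for `t ≥ 1`). -/
def bonacci (t : ℕ) : ℕ → ℕ
  | 0 => 1
  | n + 1 =>
    bonacci t n + if h : 0 < t ∧ t ≤ n + 1 then bonacci t (n + 1 - t) else 0
  termination_by n => n
  decreasing_by all_goals omega

theorem Equiv.Perm.apply_inv_self {α : Type*} (f : Equiv.Perm α) (x : α) : f (f⁻¹ x) = x :=
  Equiv.apply_symm_apply f x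

theorem Equiv.Perm.inv_apply_self {α : Type*} (f : Equiv.Perm α) (x : α) : f⁻¹ (f x) = x :=
  Equiv.symm_apply_apply f x

namespace Stmt8

lemma bonacci_zero (t : ℕ) : bonacci t 0 = 1 := by simp [bonacci]

lemma bonacci_succ (t n : ℕ) :
    bonacci t (n+1) = bonacci t n + if 0 < t ∧ t ≤ n + 1 then bonacci t (n + 1 - t) else 0 := by
  rw [bonacci]
  by_cases h : 0 < t ∧ t ≤ n + 1 <;> simp [h]

lemma bonacci_small {t n : ℕ} (h : n < t) : bonacci t n = 1 := by
  induction n with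
  | zero => exact bonacci_zero t
  | succ k ih =>
    rw [bonacci_succ, if_neg (by omega), ih (by omega)]

lemma apply_mem {π : Equiv.Perm ℕ} {T : ℕ → Prop} (h : ∀ x, ¬ T x → π x = x) :
    ∀ x, T (π x) ↔ T x := by
  intro x
  constructor
  · intro hx; by_contra hc; rw [h x hc] at hx; exact hc hx
  · intro hx; by_contra hc
    have h2 : π x = x := π.injective (h _ hc)
    rw [h2] at hc; exact hc hx

lemma finite_aux {P : Equiv.Perm ℕ → Prop} (B : ℕ)
    (hP : ∀ π, P π → ∀ x, B ≤ x → π x = x) : Finite {π : Equiv.Perm ℕ // P π} := by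
  have key : ∀ (π : Equiv.Perm ℕ), P π → ∀ x : ℕ, x < B → π x < B := by
    intro π hπ x hx
    by_contra hc
    push_neg at hc
    have h1 : π (π x) = π x := hP π hπ _ hc
    have := π.injective h1
    omega
  apply Finite.of_injective (f := fun (π : {π : Equiv.Perm ℕ // P π}) =>
    (fun x : Fin B => (⟨π.1 x, key π.1 π.2 x x.2⟩ : Fin B)))
  intro π₁ π₂ heq
  ext x
  by_cases hx : x < B
  · have h2 := congrFun heq ⟨x, hx⟩
    simp only [Fin.mk.injEq] at h2
    exact h2
  · rw [hP _ π₁.2 x (le_of_not_gt hx), hP _ π₂.2 x (le_of_not_gt hx)]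

lemma card_split {α : Type*} (P Q : α → Prop) [Finite {x // P x}] :
    Nat.card {x // P x} = Nat.card {x // P x ∧ Q x} + Nat.card {x // P x ∧ ¬ Q x} := by
  classical
  rw [← Nat.card_congr (Equiv.subtypeSubtypeEquivSubtypeInter P Q),
      ← Nat.card_congr (Equiv.subtypeSubtypeEquivSubtypeInter P (fun x => ¬ Q x))]
  rw [← Nat.card_sum]
  exact (Nat.card_congr (Equiv.sumCompl (fun x : {x // P x} => Q x.1))).symm

section Line

variable (j : ℕ)

/-- permutations supported on `[a, a+L)` with displacement in `{-1, 0, j}`. -/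
def LineP (a L : ℕ) (π : Equiv.Perm ℕ) : Prop :=
  (∀ x, ¬ (a ≤ x ∧ x < a + L) → π x = x) ∧
  (∀ x, a ≤ x → x < a + L → ((π x : ℤ) - x = -1 ∨ (π x : ℤ) - x = 0 ∨ (π x : ℤ) - x = (j : ℤ)))

lemma apply_mem' {π : Equiv.Perm ℕ} {T : ℕ → Prop} (h : ∀ x, ¬ T x → π x = x) :
    ∀ x, T (π x) ↔ T x := by
  intro x
  constructor
  · intro hx; by_contra hc; rw [h x hc] at hx; exact hc hx
  · intro hx; by_contra hc
    have h2 : π x = x := π.injective (h _ hc)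
    rw [h2] at hc; exact hc hx

lemma line_mem {a L : ℕ} {π : Equiv.Perm ℕ} (hπ : LineP j a L π) {x : ℕ}
    (h1 : a ≤ x) (h2 : x < a + L) : a ≤ π x ∧ π x < a + L :=
  (apply_mem' hπ.1 x).2 ⟨h1, h2⟩

/-- the forcing lemma : if `π a = a + j` then `π (a+k) = a+k-1` for `1 ≤ k ≤ j`. -/
lemma force {a n : ℕ} {π : Equiv.Perm ℕ} (hj : 1 ≤ j) (hπ : LineP j a (n+1) π)
    (h0 : π a = a + j) (hjn : j ≤ n) :
    ∀ k, 1 ≤ k → k ≤ j → π (a + k) = a + k - 1 := by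
  intro k
  induction k using Nat.strong_induction_on with
  | _ k IH =>
    intro hk1 hkj
    set y := a + k - 1 with hy
    have hymem : a ≤ y ∧ y < a + (n+1) := by omega
    set x := π.symm y with hx
    have hπx : π x = y := π.apply_symm_apply y
    have hxmem : a ≤ x ∧ x < a + (n+1) := by
      by_contra hc
      have := hπ.1 x hc
      rw [this] at hπx
      exact hc (hπx ▸ hymem)
    rcases hπ.2 x hxmem.1 hxmem.2 with h | h | h
    · -- π x = x - 1, so x = y + 1 = a + k
      have : x = a + k := by omega
      rw [← this, hπx]
    · -- π x = x, so x = y : contradiction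
      have hxy : x = y := by omega
      rw [hxy] at hπx
      by_cases hk : k = 1
      · exfalso
        have : y = a := by omega
        rw [this] at hπx
        omega
      · exfalso
        have h1 : π (a + (k-1)) = a + (k-1) - 1 := IH (k-1) (by omega) (by omega) (by omega)
        have : a + (k - 1) = y := by omega
        rw [this] at h1
        omega
    · -- π x = x + j = y : impossible since x ≥ a
      exfalso
      omega


/-- the cycle `(a, a+1, ..., a+j)` sending `a ↦ a+j` and `a+k ↦ a+k-1`. -/
def cyc (a : ℕ) : Equiv.Perm ℕ where
  toFun x := if x = a then a + j else if a < x ∧ x ≤ a + j then x - 1 else x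
  invFun x := if x = a + j then a else if a ≤ x ∧ x < a + j then x + 1 else x
  left_inv x := by
    dsimp only
    split_ifs <;> omega
  right_inv x := by
    dsimp only
    split_ifs <;> omega

lemma cyc_apply_self (a : ℕ) : cyc j a a = a + j := by
  simp [cyc]

lemma cyc_apply_mid (a : ℕ) {x : ℕ} (h1 : a < x) (h2 : x ≤ a + j) :
    cyc j a x = x - 1 := by
  simp only [cyc, Equiv.coe_fn_mk]
  rw [if_neg (by omega), if_pos ⟨h1, h2⟩]

lemma cyc_apply_out (a : ℕ) {x : ℕ} (h : ¬ (a ≤ x ∧ x ≤ a + j)) : cyc j a x = x := by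
  simp only [cyc, Equiv.coe_fn_mk]
  rw [if_neg (by omega), if_neg (by omega)]

lemma cyc_inv_hi (a : ℕ) : (cyc j a)⁻¹ (a + j) = a := by
  simp [cyc, Equiv.Perm.inv_def, Equiv.symm]

lemma cyc_inv_mid (a : ℕ) {x : ℕ} (h1 : a ≤ x) (h2 : x < a + j) : (cyc j a)⁻¹ x = x + 1 := by
  simp only [cyc, Equiv.Perm.inv_def, Equiv.symm, Equiv.coe_fn_mk]
  rw [if_neg (by omega), if_pos ⟨h1, h2⟩]

lemma cyc_inv_out (a : ℕ) {x : ℕ} (h : ¬ (a ≤ x ∧ x ≤ a + j)) : (cyc j a)⁻¹ x = x := by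
  simp only [cyc, Equiv.Perm.inv_def, Equiv.symm, Equiv.coe_fn_mk]
  rw [if_neg (by omega), if_neg (by omega)]


lemma pia {a n : ℕ} {π : Equiv.Perm ℕ} (hj : 1 ≤ j) (hπ : LineP j a (n+1) π)
    (hne : π a ≠ a) : π a = a + j ∧ j ≤ n := by
  have hmem := line_mem j hπ (le_refl a) (by omega)
  rcases hπ.2 a (le_refl a) (by omega) with h | h | h
  · omega
  · omega
  · omega

def caseTwoEquiv (a n : ℕ) (hj : 1 ≤ j) (hjn : j ≤ n) :
    {π : Equiv.Perm ℕ // LineP j a (n+1) π ∧ π a ≠ a} ≃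
    {π' : Equiv.Perm ℕ // LineP j (a+j+1) (n-j) π'} where
  toFun := fun p => ⟨p.1 * (cyc j a)⁻¹, by
    obtain ⟨π, hπ, hne⟩ := p
    have h0 : π a = a + j := (pia j hj hπ hne).1
    have hforce := force j hj hπ h0 hjn
    constructor
    · intro x hx
      simp only [Equiv.Perm.mul_apply]
      by_cases h1 : x = a + j
      · rw [h1, cyc_inv_hi, h0]
      · by_cases h2 : a ≤ x ∧ x < a + j
        · rw [cyc_inv_mid j a h2.1 h2.2]
          have := hforce (x + 1 - a) (by omega) (by omega)
          have hax : a + (x + 1 - a) = x + 1 := by omega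
          rw [hax] at this
          rw [this]
          omega
        · rw [cyc_inv_out j a (by omega)]
          exact hπ.1 x (by omega)
    · intro x hx1 hx2
      simp only [Equiv.Perm.mul_apply]
      rw [cyc_inv_out j a (by omega)]
      exact hπ.2 x (by omega) (by omega)⟩
  invFun := fun p => ⟨p.1 * cyc j a, by
    obtain ⟨π', h'⟩ := p
    have hfix : ∀ x, ¬ (a+j+1 ≤ x ∧ x < a+j+1+(n-j)) → π' x = x := h'.1
    refine ⟨⟨?_, ?_⟩, ?_⟩
    · intro x hx
      simp only [Equiv.Perm.mul_apply]
      rw [cyc_apply_out j a (by omega)]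
      exact hfix x (by omega)
    · intro x hx1 hx2
      simp only [Equiv.Perm.mul_apply]
      by_cases h1 : x = a
      · rw [h1, cyc_apply_self, hfix (a+j) (by omega)]
        right; right; push_cast; omega
      · by_cases h2 : a < x ∧ x ≤ a + j
        · rw [cyc_apply_mid j a h2.1 h2.2, hfix (x-1) (by omega)]
          left; push_cast [Nat.cast_sub (by omega : 1 ≤ x)]; omega
        · rw [cyc_apply_out j a (by omega)]
          rcases h'.2 x (by omega) (by omega) with h | h | h
          · left; omega
          · right; left; omega
          · right; right; omega
    · simp only [Equiv.Perm.mul_apply]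
      rw [cyc_apply_self, hfix (a+j) (by omega)]
      omega⟩
  left_inv := fun p => Subtype.ext (inv_mul_cancel_right p.1 (cyc j a))
  right_inv := fun p => Subtype.ext (mul_inv_cancel_right p.1 (cyc j a))


lemma line_card (hj : 1 ≤ j) :
    ∀ L a, Nat.card {π : Equiv.Perm ℕ // LineP j a L π} = bonacci (j+1) L := by
  intro L
  induction L using Nat.strong_induction_on with
  | _ L IH =>
    intro a
    rcases L with _ | n
    · haveI : Unique {π : Equiv.Perm ℕ // LineP j a 0 π} := by
        refine ⟨⟨⟨1, ⟨fun x _ => rfl, fun x h1 h2 => by omega⟩⟩⟩, ?_⟩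
        rintro ⟨π, hπ⟩
        apply Subtype.ext
        apply Equiv.ext
        intro x
        exact hπ.1 x (by omega)
      rw [Nat.card_unique, bonacci_zero]
    · haveI : Finite {π : Equiv.Perm ℕ // LineP j a (n+1) π} :=
        finite_aux (a+n+1) (fun π hπ x hx => hπ.1 x (by omega))
      rw [card_split (LineP j a (n+1)) (fun π => π a = a)]
      have h1 : Nat.card {π : Equiv.Perm ℕ // LineP j a (n+1) π ∧ π a = a}
          = bonacci (j+1) n := by
        rw [Nat.card_congr (Equiv.subtypeEquivRight (q := LineP j (a+1) n) ?_)]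
        · exact IH n (by omega) (a+1)
        · intro π
          constructor
          · rintro ⟨hπ, ha⟩
            constructor
            · intro x hx
              by_cases h : x = a
              · rw [h, ha]
              · exact hπ.1 x (by omega)
            · intro x hx1 hx2
              exact hπ.2 x (by omega) (by omega)
          · intro hπ
            have ha : π a = a := hπ.1 a (by omega)
            refine ⟨⟨?_, ?_⟩, ha⟩
            · intro x hx
              by_cases h : x = a
              · rw [h, ha]
              · exact hπ.1 x (by omega)
            · intro x hx1 hx2
              by_cases h : x = a
              · rw [h, ha]; right; left; omega
              · exact hπ.2 x (by omega) (by omega)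
      by_cases hjn : j ≤ n
      · have h2 : Nat.card {π : Equiv.Perm ℕ // LineP j a (n+1) π ∧ ¬ π a = a}
            = bonacci (j+1) (n - j) := by
          rw [Nat.card_congr (caseTwoEquiv j a n hj hjn)]
          exact IH (n - j) (by omega) (a+j+1)
        rw [h1, h2, bonacci_succ, if_pos ⟨by omega, by omega⟩]
        have he : n + 1 - (j+1) = n - j := by omega
        rw [he]
      · have h2 : Nat.card {π : Equiv.Perm ℕ // LineP j a (n+1) π ∧ ¬ π a = a} = 0 := by
          haveI : IsEmpty {π : Equiv.Perm ℕ // LineP j a (n+1) π ∧ ¬ π a = a} := by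
            constructor; rintro ⟨π, hπ, hne⟩
            exact hjn (pia j hj hπ hne).2
          exact Nat.card_of_isEmpty
        rw [h1, h2, bonacci_succ, if_neg (by omega)]

end Line


section Relabel

variable (m j : ℕ)

/-- permutations supported on the class `C` with displacement in `{-m, 0, jm}`. -/
def ClassP (C : ℕ → Prop) (π : Equiv.Perm ℕ) : Prop :=
  (∀ x, ¬ C x → π x = x) ∧
  (∀ x, C x → ((π x : ℤ) - x = -(m : ℤ) ∨ (π x : ℤ) - x = 0 ∨ (π x : ℤ) - x = (j : ℤ) * m))

lemma cancel_m {m : ℕ} (hm : 1 ≤ m) {a b : ℤ} (h : a * m = b * m) : a = b :=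
  mul_right_cancel₀ (show (m : ℤ) ≠ 0 by omega) h

lemma dec_enc (hm : 1 ≤ m) (s k : ℕ) : (s + k * m - s) / m = k := by
  rw [Nat.add_sub_cancel_left, Nat.mul_div_cancel k (by omega)]

lemma class_card (hm : 1 ≤ m) (hj : 1 ≤ j) (C : ℕ → Prop) (s ℓ : ℕ)
    (hchar : ∀ x, C x ↔ ∃ k, k < ℓ ∧ x = s + k * m) :
    Nat.card {π : Equiv.Perm ℕ // ClassP m j C π} = bonacci (j + 1) ℓ := by
  classical
  rw [← line_card j hj ℓ 0]
  apply Nat.card_congr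
  -- preliminary facts
  have hm0 : (m : ℤ) ≠ 0 := by omega
  refine ⟨?_, ?_, ?_, ?_⟩
  · -- forward : π ↦ σ
    rintro ⟨π, hπ⟩
    have hCp : ∀ x, C (π x) ↔ C x := apply_mem' hπ.1
    have hCpinv : ∀ x, C (π⁻¹ x) ↔ C x := by
      intro x
      have h1 := hCp (π⁻¹ x)
      rw [Equiv.Perm.apply_inv_self] at h1
      exact h1.symm
    refine ⟨⟨fun k => if k < ℓ then (π (s + k * m) - s) / m else k,
            fun k => if k < ℓ then (π⁻¹ (s + k * m) - s) / m else k, ?_, ?_⟩, ?_, ?_⟩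
    · -- left inverse
      intro k
      dsimp only
      by_cases hk : k < ℓ
      · rw [if_pos hk]
        have hC1 : C (s + k * m) := (hchar _).2 ⟨k, hk, rfl⟩
        obtain ⟨k', hk', he'⟩ := (hchar _).1 ((hCp (s + k * m)).2 hC1)
        rw [he', dec_enc m hm, if_pos hk', ← he', Equiv.Perm.inv_apply_self,
          dec_enc m hm]
      · rw [if_neg hk, if_neg hk]
    · -- right inverse
      intro k
      dsimp only
      by_cases hk : k < ℓ
      · rw [if_pos hk]
        have hC1 : C (s + k * m) := (hchar _).2 ⟨k, hk, rfl⟩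
        obtain ⟨k', hk', he'⟩ := (hchar _).1 ((hCpinv (s + k * m)).2 hC1)
        rw [he', dec_enc m hm, if_pos hk', ← he', Equiv.Perm.apply_inv_self,
          dec_enc m hm]
      · rw [if_neg hk, if_neg hk]
    · -- support
      intro x hx
      simp only [Equiv.coe_fn_mk]
      rw [if_neg (by omega)]
    · -- displacement
      intro x hx0 hxl
      simp only [Equiv.coe_fn_mk]
      rw [if_pos (by omega)]
      have hC1 : C (s + x * m) := (hchar _).2 ⟨x, by omega, rfl⟩
      obtain ⟨k', hk', he'⟩ := (hchar _).1 ((hCp (s + x * m)).2 hC1)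
      rw [he', dec_enc m hm]
      rcases hπ.2 _ hC1 with h | h | h
      · left
        rw [he'] at h
        have h1 : ((k' : ℤ) - x) * m = (-1) * m := by push_cast at h ⊢; linarith
        have := cancel_m hm h1
        omega
      · right; left
        rw [he'] at h
        have h1 : ((k' : ℤ) - x) * m = 0 * m := by push_cast at h ⊢; linarith
        have := cancel_m hm h1
        omega
      · right; right
        rw [he'] at h
        have h1 : ((k' : ℤ) - x) * m = (j : ℤ) * m := by push_cast at h ⊢; linarith
        have := cancel_m hm h1
        omega
  · -- backward : σ ↦ π
    rintro ⟨σ, hσ⟩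
    have hs : ∀ k, k < ℓ → σ k < ℓ := by
      intro k hk
      have := (apply_mem' (T := fun k => 0 ≤ k ∧ k < 0 + ℓ) (fun x hx => hσ.1 x hx) k).2
        ⟨by omega, by omega⟩
      omega
    have hsinv : ∀ k, k < ℓ → σ⁻¹ k < ℓ := by
      intro k hk
      by_contra hc
      have h1 : σ (σ⁻¹ k) = σ⁻¹ k := hσ.1 _ (by omega)
      rw [Equiv.Perm.apply_inv_self] at h1
      omega
    refine ⟨⟨fun x => if C x then s + (σ ((x - s) / m)) * m else x,
            fun x => if C x then s + (σ⁻¹ ((x - s) / m)) * m else x, ?_, ?_⟩, ?_, ?_⟩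
    · intro x
      dsimp only
      by_cases hx : C x
      · rw [if_pos hx]
        obtain ⟨k, hk, he⟩ := (hchar _).1 hx
        rw [he, dec_enc m hm]
        have hC2 : C (s + (σ k) * m) := (hchar _).2 ⟨σ k, hs k hk, rfl⟩
        rw [if_pos hC2, dec_enc m hm, Equiv.Perm.inv_apply_self]
      · rw [if_neg hx, if_neg hx]
    · intro x
      dsimp only
      by_cases hx : C x
      · rw [if_pos hx]
        obtain ⟨k, hk, he⟩ := (hchar _).1 hx
        rw [he, dec_enc m hm]
        have hC2 : C (s + (σ⁻¹ k) * m) := (hchar _).2 ⟨σ⁻¹ k, hsinv k hk, rfl⟩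
        rw [if_pos hC2, dec_enc m hm, Equiv.Perm.apply_inv_self]
      · rw [if_neg hx, if_neg hx]
    · intro x hx
      simp only [Equiv.coe_fn_mk]
      rw [if_neg hx]
    · intro x hx
      simp only [Equiv.coe_fn_mk]
      rw [if_pos hx]
      obtain ⟨k, hk, he⟩ := (hchar _).1 hx
      rw [he, dec_enc m hm]
      rcases hσ.2 k (by omega) (by omega) with h | h | h
      · left; push_cast; linear_combination (m : ℤ) * h
      · right; left; push_cast; linear_combination (m : ℤ) * h
      · right; right; push_cast; linear_combination (m : ℤ) * h
  · -- left inverse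
    rintro ⟨π, hπ⟩
    apply Subtype.ext
    apply Equiv.ext
    intro x
    simp only [Equiv.coe_fn_mk]
    by_cases hx : C x
    · rw [if_pos hx]
      obtain ⟨k, hk, he⟩ := (hchar _).1 hx
      subst he
      rw [dec_enc m hm, if_pos hk]
      have hC1 : C (s + k * m) := (hchar _).2 ⟨k, hk, rfl⟩
      obtain ⟨k', hk', he'⟩ := (hchar _).1 ((apply_mem' hπ.1 _).2 hC1)
      rw [he', dec_enc m hm]
    · rw [if_neg hx, hπ.1 x hx]
  · -- right inverse
    rintro ⟨σ, hσ⟩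
    apply Subtype.ext
    apply Equiv.ext
    intro k
    simp only [Equiv.coe_fn_mk]
    by_cases hk : k < ℓ
    · rw [if_pos hk]
      have hC1 : C (s + k * m) := (hchar _).2 ⟨k, hk, rfl⟩
      rw [if_pos hC1, dec_enc m hm, dec_enc m hm]
    · rw [if_neg hk]
      exact (hσ.1 k (by omega)).symm

end Relabel


section Peel

/-- characterization of the residue class `t` inside `[1, i*m+r]` as an arithmetic
progression. -/
lemma char_aux (m i r : ℕ) (hm : 1 ≤ m) (hrm : r < m) (t : ℕ) (ht : t < m) (x : ℕ) :
    (1 ≤ x ∧ x ≤ i * m + r ∧ x % m = t) ↔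
    ∃ k, k < (if 1 ≤ t ∧ t ≤ r then i + 1 else i) ∧ x = (if t = 0 then m else t) + k * m := by
  constructor
  · rintro ⟨h1, h2, h3⟩
    have hdm : m * (x / m) + t = x := by rw [← h3]; exact Nat.div_add_mod x m
    set q := x / m with hq
    have hqi : q ≤ i := by
      have h4 : x / m ≤ (m * i + r) / m := Nat.div_le_div_right (by linarith [Nat.mul_comm m i])
      rw [Nat.mul_add_div (by omega), Nat.div_eq_of_lt hrm] at h4
      omega
    by_cases ht0 : t = 0
    · subst ht0
      rw [if_neg (by omega), if_pos rfl]
      have hq1 : 1 ≤ q := by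
        rcases Nat.eq_zero_or_pos q with h | h
        · rw [h, Nat.mul_zero] at hdm; omega
        · exact h
      refine ⟨q - 1, by omega, ?_⟩
      have hq2 : q - 1 + 1 = q := by omega
      have he : m + (q - 1) * m = m * q := by
        calc m + (q - 1) * m = (q - 1 + 1) * m := by ring
          _ = m * q := by rw [hq2, Nat.mul_comm]
      linarith
    · rw [if_neg ht0]
      by_cases htr : t ≤ r
      · rw [if_pos ⟨by omega, htr⟩]
        exact ⟨q, by omega, by linarith [Nat.mul_comm q m]⟩
      · rw [if_neg (by omega)]
        refine ⟨q, ?_, by linarith [Nat.mul_comm q m]⟩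
        rcases Nat.lt_or_ge q i with h | h
        · exact h
        · exfalso
          have hqi' : q = i := le_antisymm hqi h
          rw [hqi'] at hdm
          have hc : m * i = i * m := Nat.mul_comm m i
          linarith
  · rintro ⟨k, hk, he⟩
    have hs1 : (if t = 0 then m else t) % m = t := by
      by_cases ht0 : t = 0
      · rw [if_pos ht0, Nat.mod_self, ht0]
      · rw [if_neg ht0, Nat.mod_eq_of_lt ht]
    have hx1 : 1 ≤ x := by
      have h5 : 1 ≤ (if t = 0 then m else t) := by split_ifs <;> omega
      calc 1 ≤ (if t = 0 then m else t) := h5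
        _ ≤ x := by rw [he]; exact Nat.le_add_right _ _
    refine ⟨hx1, ?_, by rw [he, Nat.add_mul_mod_self_right, hs1]⟩
    by_cases ht0 : t = 0
    · rw [ht0, if_pos rfl] at he
      rw [if_neg (by omega)] at hk
      have h5 : m + k * m = (k + 1) * m := by ring
      have h6 : (k + 1) * m ≤ i * m := Nat.mul_le_mul_right m (by omega)
      linarith
    · rw [if_neg ht0] at he
      by_cases htr : t ≤ r
      · rw [if_pos ⟨by omega, htr⟩] at hk
        have h6 : k * m ≤ i * m := Nat.mul_le_mul_right m (by omega)
        linarith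
      · rw [if_neg (by omega)] at hk
        have h5 : t + k * m < m + k * m := by omega
        have h6 : (k + 1) * m ≤ i * m := Nat.mul_le_mul_right m (by omega)
        have h7 : m + k * m = (k + 1) * m := by ring
        linarith

/-- gluing : restrict a permutation to an invariant decidable set. -/
def glue (π : Equiv.Perm ℕ) (p : ℕ → Prop) [DecidablePred p]
    (h : ∀ x, p (π x) ↔ p x) : Equiv.Perm ℕ where
  toFun x := if p x then π x else x
  invFun x := if p x then π⁻¹ x else x
  left_inv x := by
    dsimp only
    by_cases hx : p x
    · rw [if_pos hx, if_pos ((h x).2 hx), Equiv.Perm.inv_apply_self]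
    · rw [if_neg hx, if_neg hx]
  right_inv x := by
    dsimp only
    by_cases hx : p x
    · have h2 := h (π⁻¹ x)
      rw [Equiv.Perm.apply_inv_self] at h2
      rw [if_pos hx, if_pos (h2.1 hx), Equiv.Perm.apply_inv_self]
    · rw [if_neg hx, if_neg hx]

lemma glue_apply (π : Equiv.Perm ℕ) (p : ℕ → Prop) [DecidablePred p]
    (h : ∀ x, p (π x) ↔ p x) (x : ℕ) : glue π p h x = if p x then π x else x := rfl

lemma mod_pres {m j : ℕ} (hm : 1 ≤ m) {π : Equiv.Perm ℕ} {x : ℕ}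
    (h : (π x : ℤ) - x = -(m : ℤ) ∨ (π x : ℤ) - x = 0 ∨ (π x : ℤ) - x = (j : ℤ) * m) :
    π x % m = x % m := by
  rcases h with h | h | h
  · have h2 : π x + m = x := by omega
    conv_rhs => rw [← h2]
    rw [Nat.add_mod_right]
  · have h2 : π x = x := by omega
    rw [h2]
  · have h2 : π x = x + j * m := by
      have h3 : (π x : ℤ) = x + ((j * m : ℕ) : ℤ) := by push_cast; linarith
      exact_mod_cast h3
    rw [h2, Nat.add_mul_mod_self_right]

/-- permutations supported on residues `< t` within `[1, N]`. -/
def QP (m j N t : ℕ) (π : Equiv.Perm ℕ) : Prop :=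
  (∀ x, ¬ (1 ≤ x ∧ x ≤ N ∧ x % m < t) → π x = x) ∧
  (∀ x, 1 ≤ x → x ≤ N → x % m < t →
    ((π x : ℤ) - x = -(m : ℤ) ∨ (π x : ℤ) - x = 0 ∨ (π x : ℤ) - x = (j : ℤ) * m))

lemma peel (m j i r : ℕ) (hm : 1 ≤ m) (hj : 1 ≤ j) (hrm : r < m) :
    ∀ t, t ≤ m → Nat.card {π : Equiv.Perm ℕ // QP m j (i * m + r) t π}
      = ∏ ρ ∈ Finset.range t, bonacci (j + 1) (if 1 ≤ ρ ∧ ρ ≤ r then i + 1 else i) := by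
  intro t
  induction t with
  | zero =>
    intro _
    rw [Finset.prod_range_zero]
    haveI : Unique {π : Equiv.Perm ℕ // QP m j (i * m + r) 0 π} := by
      refine ⟨⟨⟨1, ⟨fun x _ => rfl, fun x _ _ h => by omega⟩⟩⟩, ?_⟩
      rintro ⟨π, hπ⟩
      apply Subtype.ext
      apply Equiv.ext
      intro x
      exact hπ.1 x (by omega)
    exact Nat.card_unique
  | succ t IH =>
    intro htm
    classical
    rw [Finset.prod_range_succ, ← IH (by omega),
      ← class_card m j hm hj (fun x => 1 ≤ x ∧ x ≤ i * m + r ∧ x % m = t) _ _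
        (char_aux m i r hm hrm t (by omega)),
      ← Nat.card_prod]
    apply Nat.card_congr
    set N := i * m + r with hN
    refine ⟨?_, ?_, ?_, ?_⟩
    · rintro ⟨π, hπ⟩
      have hmod : ∀ x, π x % m = x % m := by
        intro x
        by_cases hx : 1 ≤ x ∧ x ≤ N ∧ x % m < t + 1
        · exact mod_pres hm (hπ.2 x hx.1 hx.2.1 hx.2.2)
        · rw [hπ.1 x hx]
      have hp1 : ∀ x, (1 ≤ π x ∧ π x ≤ N ∧ π x % m < t) ↔ (1 ≤ x ∧ x ≤ N ∧ x % m < t) := by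
        intro x
        have h1 := apply_mem' hπ.1 x
        have h2 := hmod x
        constructor
        · rintro ⟨a, b, c⟩
          have h3 := h1.1 ⟨a, b, by omega⟩
          exact ⟨h3.1, h3.2.1, by omega⟩
        · rintro ⟨a, b, c⟩
          have h3 := h1.2 ⟨a, b, by omega⟩
          exact ⟨h3.1, h3.2.1, by omega⟩
      have hp2 : ∀ x, (1 ≤ π x ∧ π x ≤ N ∧ π x % m = t) ↔ (1 ≤ x ∧ x ≤ N ∧ x % m = t) := by
        intro x
        have h1 := apply_mem' hπ.1 x
        have h2 := hmod x
        constructor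
        · rintro ⟨a, b, c⟩
          have h3 := h1.1 ⟨a, b, by omega⟩
          exact ⟨h3.1, h3.2.1, by omega⟩
        · rintro ⟨a, b, c⟩
          have h3 := h1.2 ⟨a, b, by omega⟩
          exact ⟨h3.1, h3.2.1, by omega⟩
      refine ⟨⟨glue π (fun x => 1 ≤ x ∧ x ≤ N ∧ x % m < t) hp1, ?_, ?_⟩,
        ⟨glue π (fun x => 1 ≤ x ∧ x ≤ N ∧ x % m = t) hp2, ?_, ?_⟩⟩
      · intro x hx
        rw [glue_apply, if_neg hx]
      · intro x h1 h2 h3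
        rw [glue_apply, if_pos ⟨h1, h2, h3⟩]
        exact hπ.2 x h1 h2 (by omega)
      · intro x hx
        rw [glue_apply, if_neg hx]
      · intro x hx
        rw [glue_apply, if_pos hx]
        exact hπ.2 x hx.1 hx.2.1 (by omega)
    · rintro ⟨⟨π₁, hπ₁⟩, ⟨π₂, hπ₂⟩⟩
      refine ⟨π₁ * π₂, ?_, ?_⟩
      · intro x hx
        simp only [Equiv.Perm.mul_apply]
        rw [hπ₂.1 x (by omega), hπ₁.1 x (by omega)]
      · intro x h1 h2 h3
        simp only [Equiv.Perm.mul_apply]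
        by_cases hxt : x % m = t
        · have hy := (apply_mem' hπ₂.1 x).2 ⟨h1, h2, hxt⟩
          rw [hπ₁.1 (π₂ x) (by omega)]
          exact hπ₂.2 x ⟨h1, h2, hxt⟩
        · rw [hπ₂.1 x (by omega)]
          exact hπ₁.2 x h1 h2 (by omega)
    · rintro ⟨π, hπ⟩
      apply Subtype.ext
      apply Equiv.ext
      intro x
      simp only [Equiv.Perm.mul_apply, glue_apply]
      by_cases h2 : 1 ≤ x ∧ x ≤ N ∧ x % m = t
      · rw [if_pos h2]
        have hmod : π x % m = x % m := mod_pres hm (hπ.2 x h2.1 h2.2.1 (by omega))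
        have hmem := (apply_mem' hπ.1 x).2 ⟨h2.1, h2.2.1, by omega⟩
        rw [if_neg (by omega)]
      · rw [if_neg h2]
        by_cases h1 : 1 ≤ x ∧ x ≤ N ∧ x % m < t
        · rw [if_pos h1]
        · rw [if_neg h1]
          exact (hπ.1 x (by omega)).symm
    · rintro ⟨⟨π₁, hπ₁⟩, ⟨π₂, hπ₂⟩⟩
      have hfix2 : ∀ x, ¬ (1 ≤ x ∧ x ≤ N ∧ x % m = t) → π₂ x = x := hπ₂.1
      apply Prod.ext
      · apply Subtype.ext
        apply Equiv.ext
        intro x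
        simp only [Equiv.Perm.mul_apply, glue_apply]
        by_cases h1 : 1 ≤ x ∧ x ≤ N ∧ x % m < t
        · rw [if_pos h1, hfix2 x (by omega)]
        · rw [if_neg h1]
          exact (hπ₁.1 x h1).symm
      · apply Subtype.ext
        apply Equiv.ext
        intro x
        simp only [Equiv.Perm.mul_apply, glue_apply]
        by_cases h2 : 1 ≤ x ∧ x ≤ N ∧ x % m = t
        · rw [if_pos h2]
          have hy := (apply_mem' hπ₂.1 x).2 h2
          rw [hπ₁.1 (π₂ x) (by omega)]
        · rw [if_neg h2]
          exact (hfix2 x h2).symm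

end Peel

end Stmt8

/-- the number of permutations `π` of `{1,…,im+r}` with
`π(s)-s ∈ {-m,0,jm}` equals `(f^{(j+1)}_i)^{m-r} (f^{(j+1)}_{i+1})^r`. -/
theorem stmt_8 (m j i r : ℕ) (hm : 1 ≤ m) (hj : 1 ≤ j) (hr : r ≤ m - 1) :
    Nat.card {π : Equiv.Perm ℕ //
        (∀ x : ℕ, x ∉ Finset.Icc 1 (i * m + r) → π x = x) ∧
        (∀ s ∈ Finset.Icc 1 (i * m + r),
          (π s : ℤ) - s = -(m : ℤ) ∨ (π s : ℤ) - s = 0 ∨ (π s : ℤ) - s = (j : ℤ) * m)} =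
      bonacci (j + 1) i ^ (m - r) * bonacci (j + 1) (i + 1) ^ r := by
  classical
  have hrm : r < m := by omega
  have hiff : ∀ π : Equiv.Perm ℕ,
      ((∀ x : ℕ, x ∉ Finset.Icc 1 (i * m + r) → π x = x) ∧
       (∀ s ∈ Finset.Icc 1 (i * m + r),
          (π s : ℤ) - s = -(m : ℤ) ∨ (π s : ℤ) - s = 0 ∨ (π s : ℤ) - s = (j : ℤ) * m)) ↔
      Stmt8.QP m j (i * m + r) m π := by
    intro π
    constructor
    · rintro ⟨h1, h2⟩
      constructor
      · intro x hx
        have hmod : x % m < m := Nat.mod_lt x (by omega)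
        exact h1 x (by simp only [Finset.mem_Icc]; omega)
      · intro x ha hb _
        exact h2 x (by simp only [Finset.mem_Icc]; omega)
    · rintro ⟨h1, h2⟩
      constructor
      · intro x hx
        simp only [Finset.mem_Icc] at hx
        exact h1 x (by omega)
      · intro s hs
        simp only [Finset.mem_Icc] at hs
        exact h2 s hs.1 hs.2 (Nat.mod_lt s (by omega))
  rw [Nat.card_congr (Equiv.subtypeEquivRight hiff),
    Stmt8.peel m j i r hm hj hrm m le_rfl]
  have h1 : ∀ ρ : ℕ, bonacci (j + 1) (if 1 ≤ ρ ∧ ρ ≤ r then i + 1 else i)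
      = if 1 ≤ ρ ∧ ρ ≤ r then bonacci (j + 1) (i + 1) else bonacci (j + 1) i :=
    fun ρ => apply_ite (bonacci (j + 1)) _ _ _
  simp only [h1]
  rw [Finset.prod_ite, Finset.prod_const, Finset.prod_const]
  have hf1 : ((Finset.range m).filter (fun ρ => 1 ≤ ρ ∧ ρ ≤ r)).card = r := by
    have he : (Finset.range m).filter (fun ρ => 1 ≤ ρ ∧ ρ ≤ r) = Finset.Icc 1 r := by
      ext ρ
      simp only [Finset.mem_filter, Finset.mem_range, Finset.mem_Icc]
      omega
    rw [he, Nat.card_Icc]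
    omega
  have hf2 : ((Finset.range m).filter (fun ρ => ¬ (1 ≤ ρ ∧ ρ ≤ r))).card = m - r := by
    have h3 := Finset.card_filter_add_card_filter_not
      (s := Finset.range m) (p := fun ρ => 1 ≤ ρ ∧ ρ ≤ r)
    rw [Finset.card_range] at h3
    omega
  rw [hf1, hf2, Nat.mul_comm]
end

section
/- Let q ≥ 2 and p be integers with 1 ≤ p ≤ q−1 and 2p > q, and let Q = {1,…,q} \ {p}. Then for every n ≥ 0, the number of subsets S of {1,…,n} such that no two elements of S differ by an element of Q equals the number of compositions of n+q into parts from the infinite set {1} ∪ { q+1+jp : j = 0, 1, 2, … }. -/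
namespace Stmt12Aux

/-- The difference set `{1,…,q} \ {p}`. -/
def Qset (q p : ℕ) : Finset ℕ := (Finset.Icc 1 q).filter fun x => x ≠ p

lemma not_mem_Qset {q p d : ℕ} : d ∉ Qset q p ↔ (d = 0 ∨ q < d ∨ d = p) := by
  simp only [Qset, Finset.mem_filter, Finset.mem_Icc, not_and, ne_eq, not_not]
  constructor
  · intro h
    by_cases h1 : 1 ≤ d
    · by_cases h2 : d ≤ q
      · exact Or.inr (Or.inr (h ⟨h1, h2⟩))
      · omega
    · omega
  · intro h hd
    omega

/-- Number of valid subsets of `{1,…,n}`. -/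
def fC (q p n : ℕ) : ℕ := restrictedCount (Qset q p) n

/-- Number of valid subsets of `{1,…,n}` containing `n`. -/
def hC (q p n : ℕ) : ℕ :=
  ((Finset.Icc 1 n).powerset.filter
    fun s => (∀ a ∈ s, ∀ b ∈ s, b < a → a - b ∉ Qset q p) ∧ n ∈ s).card

/-- The allowed parts of compositions. -/
def isPart (q p x : ℕ) : Prop := x = 1 ∨ ∃ j : ℕ, x = q + 1 + j * p

/-- Number of compositions of `m` into allowed parts. -/
noncomputable def gC (q p m : ℕ) : ℕ :=
  Nat.card {L : List ℕ // (∀ x ∈ L, isPart q p x) ∧ L.sum = m}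

/-- Number of compositions of `m + q` into allowed parts whose first part is big. -/
noncomputable def bC (q p m : ℕ) : ℕ :=
  Nat.card {yt : ℕ × List ℕ // (∃ j : ℕ, yt.1 = q + 1 + j * p) ∧
    (∀ x ∈ yt.2, isPart q p x) ∧ yt.1 + yt.2.sum = m + q}

instance gFinite (q p m : ℕ) :
    Finite {L : List ℕ // (∀ x ∈ L, isPart q p x) ∧ L.sum = m} := by
  refine Finite.of_injective
    (fun L => (⟨L.1, fun {i} hi => ?_, L.2.2⟩ : Composition m)) ?_
  · rcases L.2.1 i hi with h | ⟨j, h⟩ <;> omega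
  · intro a b hab
    exact Subtype.ext (congrArg Composition.blocks hab)

instance bFinite (q p m : ℕ) :
    Finite {yt : ℕ × List ℕ // (∃ j : ℕ, yt.1 = q + 1 + j * p) ∧
      (∀ x ∈ yt.2, isPart q p x) ∧ yt.1 + yt.2.sum = m + q} := by
  refine Finite.of_injective (β := {L : List ℕ // (∀ x ∈ L, isPart q p x) ∧ L.sum = m + q})
    (fun yt => ⟨yt.1.1 :: yt.1.2, ?_, ?_⟩) ?_
  · intro x hx
    rcases List.mem_cons.mp hx with h | h
    · exact h ▸ Or.inr yt.2.1
    · exact yt.2.2.1 x h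
  · simpa [List.sum_cons] using yt.2.2.2
  · intro a b hab
    have h := congrArg Subtype.val hab
    simp only at h
    injection h with h1 h2
    apply Subtype.ext
    rw [Prod.ext_iff]
    exact ⟨h1, h2⟩

lemma sum_eq_length_of_all_one {l : List ℕ} (h : ∀ x ∈ l, x = 1) : l.sum = l.length := by
  induction l with
  | nil => simp
  | cons a t ih =>
    have ha : a = 1 := h a (List.mem_cons_self)
    have ht := ih fun x hx => h x (List.mem_cons_of_mem _ hx)
    simp only [List.sum_cons, List.length_cons, ha, ht]
    omega

lemma gC_small (q p m : ℕ) (hm : m ≤ q) : gC q p m = 1 := by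
  have hall : ∀ (L : {L : List ℕ // (∀ x ∈ L, isPart q p x) ∧ L.sum = m}),
      L.1 = List.replicate m 1 := by
    rintro ⟨L, hL, hs⟩
    have h1 : ∀ x ∈ L, x = 1 := by
      intro x hx
      rcases hL x hx with h | ⟨j, h⟩
      · exact h
      · have := List.le_sum_of_mem hx
        omega
    have hlen : L.length = m := by
      have := sum_eq_length_of_all_one h1; omega
    rw [List.eq_replicate_iff]
    exact ⟨hlen, h1⟩
  haveI : Nonempty {L : List ℕ // (∀ x ∈ L, isPart q p x) ∧ L.sum = m} := by
    refine ⟨⟨List.replicate m 1, ?_, by simp⟩⟩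
    intro x hx
    exact Or.inl (List.eq_of_mem_replicate hx)
  haveI : Subsingleton {L : List ℕ // (∀ x ∈ L, isPart q p x) ∧ L.sum = m} := by
    constructor
    intro a b
    exact Subtype.ext ((hall a).trans (hall b).symm)
  exact Nat.card_unique

lemma bC_zero (q p : ℕ) : bC q p 0 = 0 := by
  have : IsEmpty {yt : ℕ × List ℕ // (∃ j : ℕ, yt.1 = q + 1 + j * p) ∧
      (∀ x ∈ yt.2, isPart q p x) ∧ yt.1 + yt.2.sum = 0 + q} := by
    constructor
    rintro ⟨⟨y, t⟩, ⟨j, hj⟩, _, hsum⟩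
    simp only at hj hsum
    omega
  rw [bC]
  exact Nat.card_of_isEmpty

/-- splitting a composition of `n+1+q` on whether the first part is `1`. -/
lemma gC_rec (q p : ℕ) (hq : 2 ≤ q) (n : ℕ) :
    gC q p (n + 1 + q) = gC q p (n + q) + bC q p (n + 1) := by
  rw [gC, gC, bC, ← Nat.card_sum]
  refine (Nat.card_eq_of_bijective (fun x =>
    match x with
    | Sum.inl ⟨L, hL, hs⟩ =>
      ⟨1 :: L, fun x hx => (List.mem_cons.mp hx).elim Or.inl (hL x),
        by simp only [List.sum_cons, hs]; omega⟩
    | Sum.inr ⟨⟨y, t⟩, hy, ht, hsum⟩ =>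
      ⟨y :: t, fun x hx => (List.mem_cons.mp hx).elim (fun h => h ▸ Or.inr hy) (ht x),
        by simp only [List.sum_cons]; simp only at hsum; omega⟩) ⟨?_, ?_⟩).symm
  · -- injective
    rintro (⟨L, hL, hs⟩ | ⟨⟨y, t⟩, hy, ht, hsum⟩)
      (⟨L', hL', hs'⟩ | ⟨⟨y', t'⟩, hy', ht', hsum'⟩) h <;>
      (have h' := congrArg Subtype.val h; simp only at h'; injection h' with h1 h2)
    · subst h2; rfl
    · exfalso; obtain ⟨j', hj'⟩ := hy'; simp only at hj'; omega
    · exfalso; obtain ⟨j, hj⟩ := hy; simp only at hj; omega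
    · subst h1; subst h2; rfl
  · -- surjective
    rintro ⟨L, hL, hs⟩
    match L, hL, hs with
    | [], hL, hs => exact absurd hs (by simp; omega)
    | x :: t, hL, hs =>
      rcases hL x (List.mem_cons_self) with h1 | hy
      · refine ⟨Sum.inl ⟨t, fun y hy => hL y (List.mem_cons_of_mem _ hy), ?_⟩, ?_⟩
        · simp only [List.sum_cons, h1] at hs; omega
        · exact Subtype.ext (by simp only; rw [h1])
      · refine ⟨Sum.inr ⟨⟨x, t⟩, hy, fun y hy => hL y (List.mem_cons_of_mem _ hy), ?_⟩, ?_⟩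
        · simp only [List.sum_cons] at hs; simp only; omega
        · exact Subtype.ext rfl

/-- splitting a big-headed composition on whether the first part is exactly `q+1`. -/
lemma bC_rec (q p : ℕ) (hq : 2 ≤ q) (hp1 : 1 ≤ p) (n : ℕ) :
    bC q p (n + 1) = bC q p (n + 1 - p) + gC q p n := by
  rcases le_or_gt (n + 1) p with hle | hlt
  · -- small case: only head q+1 possible, and bC (n+1-p) = bC 0 = 0
    have h0 : n + 1 - p = 0 := by omega
    rw [h0, bC_zero, zero_add, bC, gC]
    refine (Nat.card_eq_of_bijective (fun t =>
      ⟨⟨q + 1, t.1⟩, ⟨0, by omega⟩, t.2.1, by simp only; have := t.2.2; omega⟩)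
      ⟨?_, ?_⟩).symm
    · intro a b hab
      have h := congrArg (fun z => z.1.2) hab
      exact Subtype.ext h
    · rintro ⟨⟨y, t⟩, ⟨j, hj⟩, ht, hsum⟩
      simp only at hj hsum
      match j, hj with
      | 0, hj =>
        have hy : y = q + 1 := by rw [hj]; ring
        refine ⟨⟨t, ht, by omega⟩, ?_⟩
        apply Subtype.ext
        simp only
        rw [hy]
      | (j' + 1), hj =>
        exfalso
        have hple : p ≤ (j' + 1) * p := Nat.le_mul_of_pos_left p (Nat.succ_pos j')
        omega
  · -- big case: n + 1 > p
    rw [bC, bC, gC, ← Nat.card_sum]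
    refine (Nat.card_eq_of_bijective (fun x =>
      match x with
      | Sum.inl ⟨⟨y, t⟩, hy, ht, hsum⟩ =>
        ⟨⟨y + p, t⟩, by obtain ⟨j, hj⟩ := hy; exact ⟨j + 1, by simp only at hj ⊢; rw [hj]; ring⟩,
          ht, by simp only at hsum ⊢; omega⟩
      | Sum.inr ⟨t, ht, hsum⟩ =>
        ⟨⟨q + 1, t⟩, ⟨0, by omega⟩, ht, by simp only at hsum ⊢; omega⟩) ⟨?_, ?_⟩).symm
    · rintro (⟨⟨y, t⟩, hy, ht, hsum⟩ | ⟨t, ht, hsum⟩)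
        (⟨⟨y', t'⟩, hy', ht', hsum'⟩ | ⟨t', ht', hsum'⟩) h <;>
        (have h' := congrArg Subtype.val h; simp only [Prod.mk.injEq] at h')
      · obtain ⟨h1, h2⟩ := h'
        have hy2 : y = y' := by omega
        subst hy2; subst h2; rfl
      · exfalso
        obtain ⟨j, hj⟩ := hy
        simp only at hj
        obtain ⟨h1, h2⟩ := h'
        omega
      · exfalso
        obtain ⟨j', hj'⟩ := hy'
        simp only at hj'
        obtain ⟨h1, h2⟩ := h'
        omega
      · obtain ⟨h1, h2⟩ := h'
        subst h2; rfl
    · rintro ⟨⟨y, t⟩, ⟨j, hj⟩, ht, hsum⟩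
      simp only at hj hsum
      match j, hj with
      | 0, hj =>
        have hy : y = q + 1 := by rw [hj]; ring
        refine ⟨Sum.inr ⟨t, ht, by omega⟩, ?_⟩
        apply Subtype.ext
        simp only
        rw [hy]
      | (j' + 1), hj =>
        refine ⟨Sum.inl ⟨⟨q + 1 + j' * p, t⟩, ⟨j', rfl⟩, ht, ?_⟩, ?_⟩
        · simp only
          have hy : q + 1 + j' * p + p = y := by
            rw [hj]; ring
          omega
        · apply Subtype.ext
          simp only
          have : q + 1 + j' * p + p = y := by rw [hj]; ring
          rw [this]

/-! ### Finset side -/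

lemma fC_zero (q p : ℕ) : fC q p 0 = 1 := by
  rw [fC, restrictedCount]
  rw [show Finset.Icc 1 0 = (∅ : Finset ℕ) from Finset.Icc_eq_empty (by omega)]
  rw [Finset.powerset_empty]
  rw [Finset.filter_singleton]
  rw [if_pos]
  · simp
  · intro a ha
    exact absurd ha (Finset.notMem_empty a)

lemma hC_zero (q p : ℕ) : hC q p 0 = 0 := by
  rw [hC]
  rw [show Finset.Icc 1 0 = (∅ : Finset ℕ) from Finset.Icc_eq_empty (by omega)]
  rw [Finset.powerset_empty, Finset.filter_singleton]
  rw [if_neg]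
  · simp
  · rintro ⟨-, h⟩
    exact absurd h (Finset.notMem_empty 0)

lemma fC_rec (q p n : ℕ) : fC q p (n + 1) = fC q p n + hC q p (n + 1) := by
  classical
  rw [fC, fC, restrictedCount, restrictedCount, hC]
  have hsplit := Finset.card_filter_add_card_filter_not
    (s := (Finset.Icc 1 (n + 1)).powerset.filter
      fun s => ∀ a ∈ s, ∀ b ∈ s, b < a → a - b ∉ Qset q p)
    (p := fun s => (n + 1) ∈ s)
  rw [Finset.filter_filter, Finset.filter_filter] at hsplit
  have h2 : ((Finset.Icc 1 (n + 1)).powerset.filter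
      fun s => (∀ a ∈ s, ∀ b ∈ s, b < a → a - b ∉ Qset q p) ∧ ¬ (n + 1) ∈ s) =
      ((Finset.Icc 1 n).powerset.filter
      fun s => ∀ a ∈ s, ∀ b ∈ s, b < a → a - b ∉ Qset q p) := by
    ext s
    simp only [Finset.mem_filter, Finset.mem_powerset]
    constructor
    · rintro ⟨hsub, hV, hn⟩
      refine ⟨?_, hV⟩
      intro a ha
      have h1 := hsub ha
      simp only [Finset.mem_Icc] at h1 ⊢
      have : a ≠ n + 1 := fun h => hn (h ▸ ha)
      omega
    · rintro ⟨hsub, hV⟩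
      refine ⟨?_, hV, ?_⟩
      · intro a ha
        have h1 := hsub ha
        simp only [Finset.mem_Icc] at h1 ⊢
        omega
      · intro h
        have := hsub h
        simp only [Finset.mem_Icc] at this
        omega
  rw [h2] at hsplit
  omega

section Hrec

variable {q p : ℕ}

/-- The branch where `n+1-p ∈ s`: maps to valid subsets of `Icc 1 (n+1-p)` containing
`n+1-p`. -/
lemma hC_split1 (hq : 2 ≤ q) (hp1 : 1 ≤ p) (hp2 : p ≤ q - 1) (hpq : q < 2 * p) (n : ℕ) :
    (((Finset.Icc 1 (n + 1)).powerset.filter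
      fun s => ((∀ a ∈ s, ∀ b ∈ s, b < a → a - b ∉ Qset q p) ∧ (n + 1) ∈ s) ∧
        (n + 1 - p) ∈ s)).card = hC q p (n + 1 - p) := by
  classical
  rw [hC]
  refine Finset.card_bij' (fun s _ => s.erase (n + 1)) (fun t _ => insert (n + 1) t)
    ?_ ?_ ?_ ?_
  · -- forward membership
    rintro s hs
    simp only [Finset.mem_filter, Finset.mem_powerset] at hs
    obtain ⟨hsub, ⟨hV, hN⟩, hm⟩ := hs
    have hm1 : 1 ≤ n + 1 - p := by
      have := hsub hm
      simp only [Finset.mem_Icc] at this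
      omega
    simp only [Finset.mem_filter, Finset.mem_powerset]
    refine ⟨?_, ⟨?_, ?_⟩⟩
    · -- erase s (n+1) ⊆ Icc 1 (n+1-p)
      intro b hb
      have hbne := Finset.ne_of_mem_erase hb
      have hbs := Finset.mem_of_mem_erase hb
      have hbI := hsub hbs
      simp only [Finset.mem_Icc] at hbI ⊢
      have hblt : b < n + 1 := by omega
      have := hV (n + 1) hN b hbs hblt
      rw [not_mem_Qset] at this
      omega
    · intro a ha b hb hba
      exact hV a (Finset.mem_of_mem_erase ha) b (Finset.mem_of_mem_erase hb) hba
    · exact Finset.mem_erase.mpr ⟨by omega, hm⟩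
  · -- backward membership
    rintro t ht
    simp only [Finset.mem_filter, Finset.mem_powerset] at ht
    obtain ⟨hsub, hV, hm⟩ := ht
    have hm1 : 1 ≤ n + 1 - p := by
      have := hsub hm
      simp only [Finset.mem_Icc] at this
      omega
    have hpn : p ≤ n := by omega
    have htb : ∀ b ∈ t, 1 ≤ b ∧ b ≤ n + 1 - p := by
      intro b hb
      have := hsub hb
      simp only [Finset.mem_Icc] at this
      exact this
    simp only [Finset.mem_filter, Finset.mem_powerset]
    refine ⟨?_, ⟨?_, ?_⟩, ?_⟩
    · intro a ha
      rcases Finset.mem_insert.mp ha with h | h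
      · simp only [Finset.mem_Icc]; omega
      · have := htb a h
        simp only [Finset.mem_Icc]
        omega
    · -- validity of insert
      intro a ha b hb hba
      rcases Finset.mem_insert.mp ha with hA | hA
      · rcases Finset.mem_insert.mp hb with hB | hB
        · omega
        · -- a = n+1, b ∈ t
          subst hA
          have hbb := htb b hB
          rw [not_mem_Qset]
          by_cases hbm : b = n + 1 - p
          · right; right; omega
          · have hblt : b < n + 1 - p := by omega
            have := hV (n + 1 - p) hm b hB hblt
            rw [not_mem_Qset] at this
            omega
      · rcases Finset.mem_insert.mp hb with hB | hB
        · -- b = n+1, a ∈ t: impossible since b < a ≤ n+1-p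
          exfalso
          have := htb a hA
          omega
        · exact hV a hA b hB hba
    · exact Finset.mem_insert_self _ _
    · refine Finset.mem_insert.mpr (Or.inr hm)
  · -- left inverse
    rintro s hs
    simp only [Finset.mem_filter, Finset.mem_powerset] at hs
    exact Finset.insert_erase hs.2.1.2
  · -- right inverse
    rintro t ht
    simp only [Finset.mem_filter, Finset.mem_powerset] at ht
    apply Finset.erase_insert
    intro h
    have := ht.1 h
    simp only [Finset.mem_Icc] at this
    omega

/-- The branch where `n+1-p ∉ s`: maps to valid subsets of `Icc 1 (n-q)`. -/
lemma hC_split2 (hq : 2 ≤ q) (hp1 : 1 ≤ p) (hp2 : p ≤ q - 1) (hpq : q < 2 * p) (n : ℕ) :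
    (((Finset.Icc 1 (n + 1)).powerset.filter
      fun s => ((∀ a ∈ s, ∀ b ∈ s, b < a → a - b ∉ Qset q p) ∧ (n + 1) ∈ s) ∧
        ¬ (n + 1 - p) ∈ s)).card = fC q p (n - q) := by
  classical
  rw [fC, restrictedCount]
  refine Finset.card_bij' (fun s _ => s.erase (n + 1)) (fun t _ => insert (n + 1) t)
    ?_ ?_ ?_ ?_
  · rintro s hs
    simp only [Finset.mem_filter, Finset.mem_powerset] at hs
    obtain ⟨hsub, ⟨hV, hN⟩, hm⟩ := hs
    simp only [Finset.mem_filter, Finset.mem_powerset]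
    refine ⟨?_, ?_⟩
    · intro b hb
      have hbne := Finset.ne_of_mem_erase hb
      have hbs := Finset.mem_of_mem_erase hb
      have hbI := hsub hbs
      simp only [Finset.mem_Icc] at hbI ⊢
      have hblt : b < n + 1 := by omega
      have h2 := hV (n + 1) hN b hbs hblt
      rw [not_mem_Qset] at h2
      -- b cannot be n+1-p since n+1-p ∉ s
      have : b ≠ n + 1 - p := fun h => hm (h ▸ hbs)
      omega
    · intro a ha b hb hba
      exact hV a (Finset.mem_of_mem_erase ha) b (Finset.mem_of_mem_erase hb) hba
  · rintro t ht
    simp only [Finset.mem_filter, Finset.mem_powerset] at ht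
    obtain ⟨hsub, hV⟩ := ht
    have htb : ∀ b ∈ t, 1 ≤ b ∧ b ≤ n - q := by
      intro b hb
      have := hsub hb
      simp only [Finset.mem_Icc] at this
      exact this
    simp only [Finset.mem_filter, Finset.mem_powerset]
    refine ⟨?_, ⟨?_, ?_⟩, ?_⟩
    · intro a ha
      rcases Finset.mem_insert.mp ha with h | h
      · simp only [Finset.mem_Icc]; omega
      · have := htb a h
        simp only [Finset.mem_Icc]
        omega
    · intro a ha b hb hba
      rcases Finset.mem_insert.mp ha with hA | hA
      · rcases Finset.mem_insert.mp hb with hB | hB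
        · omega
        · subst hA
          have hbb := htb b hB
          rw [not_mem_Qset]
          omega
      · rcases Finset.mem_insert.mp hb with hB | hB
        · exfalso
          have := htb a hA
          omega
        · exact hV a hA b hB hba
    · exact Finset.mem_insert_self _ _
    · intro h
      rcases Finset.mem_insert.mp h with h | h
      · omega
      · have := htb _ h
        omega
  · rintro s hs
    simp only [Finset.mem_filter, Finset.mem_powerset] at hs
    exact Finset.insert_erase hs.2.1.2
  · rintro t ht
    simp only [Finset.mem_filter, Finset.mem_powerset] at ht
    apply Finset.erase_insert
    intro h
    have := ht.1 h
    simp only [Finset.mem_Icc] at this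
    omega

lemma hC_rec (hq : 2 ≤ q) (hp1 : 1 ≤ p) (hp2 : p ≤ q - 1) (hpq : q < 2 * p) (n : ℕ) :
    hC q p (n + 1) = hC q p (n + 1 - p) + fC q p (n - q) := by
  classical
  rw [hC]
  rw [← Finset.card_filter_add_card_filter_not
    (s := (Finset.Icc 1 (n + 1)).powerset.filter
      fun s => (∀ a ∈ s, ∀ b ∈ s, b < a → a - b ∉ Qset q p) ∧ (n + 1) ∈ s)
    (p := fun s => (n + 1 - p) ∈ s)]
  rw [Finset.filter_filter, Finset.filter_filter]
  rw [hC_split1 hq hp1 hp2 hpq n, hC_split2 hq hp1 hp2 hpq n]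

end Hrec

/-! ### Main induction -/

lemma main (q p : ℕ) (hq : 2 ≤ q) (hp1 : 1 ≤ p) (hp2 : p ≤ q - 1) (hpq : q < 2 * p) :
    ∀ n : ℕ, fC q p n = gC q p (n + q) ∧ hC q p n = bC q p n := by
  intro n
  induction n using Nat.strong_induction_on with
  | _ n ih =>
    match n with
    | 0 =>
      constructor
      · rw [fC_zero, zero_add, gC_small q p q le_rfl]
      · rw [hC_zero, bC_zero]
    | (k + 1) =>
      have hb : hC q p (k + 1) = bC q p (k + 1) := by
        rw [hC_rec hq hp1 hp2 hpq k, bC_rec q p hq hp1 k]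
        congr 1
        · -- hC (k+1-p) = bC (k+1-p)
          exact (ih (k + 1 - p) (by omega)).2
        · -- fC (k - q) = gC k
          rcases le_or_gt q k with h | h
          · have := (ih (k - q) (by omega)).1
            rwa [show k - q + q = k by omega] at this
          · have hkq : k - q = 0 := by omega
            rw [hkq, fC_zero, gC_small q p k (by omega)]
      constructor
      · rw [fC_rec, hb, (ih k (by omega)).1, gC_rec q p hq k]
      · exact hb

end Stmt12Aux

/-- for `Q = {1,…,q} \ {p}` with `2p > q`, `S^Q_n` counts
compositions of `n+q` into parts from `{1} ∪ {q+1+jp : j ≥ 0}`. -/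
theorem stmt_12 (q p : ℕ) (hq : 2 ≤ q) (hp1 : 1 ≤ p) (hp2 : p ≤ q - 1)
    (hpq : q < 2 * p) (n : ℕ) :
    restrictedCount ((Finset.Icc 1 q).filter fun x => x ≠ p) n =
      Nat.card {L : List ℕ //
        (∀ x ∈ L, x = 1 ∨ ∃ j : ℕ, x = q + 1 + j * p) ∧ L.sum = n + q} := by
  exact (Stmt12Aux.main q p hq hp1 hp2 hpq n).1
end

section
/- For every n ≥ 0, the number of subsets S of {1,…,n} such that no two elements of S differ by 1 or by 3 (disallowed-differences set Q = {1,3}) equals the number of binary words of length n that contain neither the subword 00 nor the subword 0110 as a contiguous factor. -/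
lemma infix_map_range {u : List Bool} {f : ℕ → Bool} {n : ℕ} :
    u <:+: (List.range n).map f ↔
      ∃ i, i + u.length ≤ n ∧ ∀ j (h : j < u.length), u[j] = f (i + j) := by
  constructor
  · rintro ⟨s, t, hst⟩
    have hlen := congrArg List.length hst
    simp at hlen
    refine ⟨s.length, by omega, fun j hj => ?_⟩
    have h2 : (s ++ u ++ t)[s.length + j]'(by simp; omega) = u[j] := by
      rw [List.getElem_append_left (by simp; omega)]
      rw [List.getElem_append_right (by omega)]
      congr 1
      omega
    rw [List.getElem_of_eq hst] at h2
    simpa using h2.symm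
  · rintro ⟨i, hin, hu⟩
    have h1 : u = (((List.range n).map f).drop i).take u.length := by
      apply List.ext_getElem
      · simp; omega
      · intro j h1 h2
        simp [hu j h1]
    rw [h1]
    exact (List.take_prefix _ _).isInfix.trans (List.drop_suffix _ _).isInfix

lemma infix2 (f : ℕ → Bool) (n : ℕ) (a b : Bool) :
    [a, b] <:+: (List.range n).map f ↔ ∃ i, i + 2 ≤ n ∧ f i = a ∧ f (i+1) = b := by
  rw [infix_map_range]
  constructor
  · rintro ⟨i, h, hu⟩
    refine ⟨i, by simpa using h, ?_, ?_⟩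
    · simpa using (hu 0 (by norm_num)).symm
    · simpa using (hu 1 (by norm_num)).symm
  · rintro ⟨i, h, h0, h1⟩
    refine ⟨i, by simpa using h, ?_⟩
    intro j hj
    have hj' : j < 2 := by simpa using hj
    interval_cases j <;> simp [h0, h1]

lemma infix4 (f : ℕ → Bool) (n : ℕ) (a b c d : Bool) :
    [a, b, c, d] <:+: (List.range n).map f ↔
      ∃ i, i + 4 ≤ n ∧ f i = a ∧ f (i+1) = b ∧ f (i+2) = c ∧ f (i+3) = d := by
  rw [infix_map_range]
  constructor
  · rintro ⟨i, h, hu⟩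
    refine ⟨i, by simpa using h, ?_, ?_, ?_, ?_⟩
    · simpa using (hu 0 (by norm_num)).symm
    · simpa using (hu 1 (by norm_num)).symm
    · simpa using (hu 2 (by norm_num)).symm
    · simpa using (hu 3 (by norm_num)).symm
  · rintro ⟨i, h, h0, h1, h2, h3⟩
    refine ⟨i, by simpa using h, ?_⟩
    intro j hj
    have hj' : j < 4 := by simpa using hj
    interval_cases j <;> simp [h0, h1, h2, h3]

/-- `S^{{1,3}}_n` equals the number of binary words of length `n`
containing neither `00` nor `0110` as a contiguous factor (here `0 ↦ false`,
`1 ↦ true`). -/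
theorem stmt_16 (n : ℕ) :
    restrictedCount {1, 3} n =
      Nat.card {w : List Bool // w.length = n ∧
        ¬ [false, false] <:+: w ∧ ¬ [false, true, true, false] <:+: w} := by
  classical
  unfold restrictedCount
  set F := ((Finset.Icc 1 n).powerset.filter
    fun s => ∀ a ∈ s, ∀ b ∈ s, b < a → a - b ∉ ({1, 3} : Finset ℕ)) with hF
  set g : Finset ℕ → List Bool := fun s => (List.range n).map (fun i => decide (i+1 ∉ s)) with hg
  have hmemF : ∀ s, s ∈ F ↔ s ⊆ Finset.Icc 1 n ∧
      ∀ a ∈ s, ∀ b ∈ s, b < a → a - b ≠ 1 ∧ a - b ≠ 3 := by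
    intro s
    simp [hF, Finset.mem_filter, Finset.mem_powerset]
  have hP : ∀ s : Finset ℕ,
      (¬ [false, false] <:+: g s ↔ ¬ ∃ i, i + 2 ≤ n ∧ i+1 ∈ s ∧ i+2 ∈ s) ∧
      (¬ [false, true, true, false] <:+: g s ↔
        ¬ ∃ i, i + 4 ≤ n ∧ i+1 ∈ s ∧ i+2 ∉ s ∧ i+3 ∉ s ∧ i+4 ∈ s) := by
    intro s
    constructor
    · rw [hg, infix2]
      simp only [decide_eq_false_iff_not, not_not]
    · rw [hg, infix4]
      simp only [decide_eq_false_iff_not, decide_eq_true_eq, not_not]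
  have hfwd : ∀ s ∈ F, ¬ [false, false] <:+: g s ∧ ¬ [false, true, true, false] <:+: g s := by
    intro s hs
    obtain ⟨hsub, hcond⟩ := (hmemF s).mp hs
    refine ⟨(hP s).1.mpr ?_, (hP s).2.mpr ?_⟩
    · rintro ⟨i, h1, h2, h3⟩
      exact ((hcond _ h3 _ h2 (by omega)).1 (by omega))
    · rintro ⟨i, h1, h2, h3, h4, h5⟩
      exact ((hcond _ h5 _ h2 (by omega)).2 (by omega))
  have hinj : ∀ s ∈ F, ∀ t ∈ F, g s = g t → s = t := by
    intro s hs t ht hgst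
    obtain ⟨hsub, -⟩ := (hmemF s).mp hs
    obtain ⟨htub, -⟩ := (hmemF t).mp ht
    ext k
    by_cases hk : 1 ≤ k ∧ k ≤ n
    · have hlt : k - 1 < n := by omega
      have := List.getElem_of_eq hgst (i := k - 1) (by simp [hg]; omega)
      simp only [hg, List.getElem_map, List.getElem_range] at this
      have hk1 : k - 1 + 1 = k := by omega
      rw [hk1] at this
      simp only [decide_eq_decide] at this
      tauto
    · constructor
      · intro h; exact absurd (Finset.mem_Icc.mp (hsub h)) hk
      · intro h; exact absurd (Finset.mem_Icc.mp (htub h)) hk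
  have hsurj : ∀ w : List Bool, w.length = n → ¬ [false, false] <:+: w →
      ¬ [false, true, true, false] <:+: w → ∃ s ∈ F, g s = w := by
    intro w hw h00 h0110
    set s : Finset ℕ := (Finset.Icc 1 n).filter (fun i => w.getD (i-1) true = false) with hs
    have hmem : ∀ k, k ∈ s ↔ (1 ≤ k ∧ k ≤ n ∧ w.getD (k-1) true = false) := by
      intro k
      simp [hs, Finset.mem_filter, Finset.mem_Icc]
      tauto
    have hgsw : g s = w := by
      apply List.ext_getElem
      · simp [hg, hw]
      · intro i h1 h2
        simp only [hg, List.getElem_map, List.getElem_range]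
        have hi : i < n := by omega
        have hm : (i + 1 ∈ s) ↔ w[i]'h2 = false := by
          rw [hmem]
          rw [List.getD_eq_getElem _ _ (by omega)]
          constructor
          · rintro ⟨-, -, h⟩; simpa using h
          · intro h; exact ⟨by omega, by omega, by simpa using h⟩
        cases hwi : w[i]'h2 with
        | false => simp [hm, hwi]
        | true => simp [hm, hwi]
    refine ⟨s, ?_, hgsw⟩
    rw [hmemF]
    constructor
    · exact Finset.filter_subset _ _
    · rw [← hgsw] at h00 h0110
      have h00' := (hP s).1.mp h00
      have h0110' := (hP s).2.mp h0110
      intro a ha b hb hba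
      have hb1 : 1 ≤ b := ((hmem b).mp hb).1
      have han : a ≤ n := ((hmem a).mp ha).2.1
      constructor
      · intro h1
        apply h00'
        refine ⟨b - 1, by omega, by simpa [show b - 1 + 1 = b by omega] using hb,
          by simpa [show b - 1 + 2 = a by omega] using ha⟩
      · intro h3
        have hab : a = b + 3 := by omega
        have hb1s : b + 1 ∉ s := by
          intro h
          exact h00' ⟨b - 1, by omega, by simpa [show b - 1 + 1 = b by omega] using hb,
            by simpa [show b - 1 + 2 = b + 1 by omega] using h⟩
        have hb2s : b + 2 ∉ s := by
          intro h
          refine h00' ⟨b + 1, by omega, by simpa [show b + 1 + 1 = b + 2 by omega] using h,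
            by simpa [show b + 1 + 2 = b + 3 by omega, ← hab] using ha⟩
        apply h0110'
        refine ⟨b - 1, by omega, by simpa [show b - 1 + 1 = b by omega] using hb,
          by simpa [show b - 1 + 2 = b + 1 by omega] using hb1s,
          by simpa [show b - 1 + 3 = b + 2 by omega] using hb2s,
          by simpa [show b - 1 + 4 = a by omega, hab] using ha⟩
  set W : Finset (List Bool) := F.image g with hW
  have hiff : ∀ w : List Bool, (w.length = n ∧ ¬ [false, false] <:+: w ∧
      ¬ [false, true, true, false] <:+: w) ↔ w ∈ W := by
    intro w
    constructor
    · rintro ⟨h1, h2, h3⟩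
      obtain ⟨s, hsF, hgs⟩ := hsurj w h1 h2 h3
      exact Finset.mem_image.mpr ⟨s, hsF, hgs⟩
    · intro hw
      obtain ⟨s, hsF, rfl⟩ := Finset.mem_image.mp hw
      obtain ⟨h2, h3⟩ := hfwd s hsF
      exact ⟨by simp [hg], h2, h3⟩
  have hcard1 : Nat.card {w : List Bool // w.length = n ∧
      ¬ [false, false] <:+: w ∧ ¬ [false, true, true, false] <:+: w} = W.card := by
    rw [Nat.card_congr (Equiv.subtypeEquivRight hiff)]
    rw [Nat.card_eq_fintype_card, Fintype.card_coe]
  have hcard2 : W.card = F.card := Finset.card_image_of_injOn (fun s hs t ht => hinj s hs t ht)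
  rw [hcard1, hcard2]
end
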